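/- arXiv:1812.07243 — 11 statements merged into one kernel-verified Lean document; each statement's English description precedes it below -/
import Mathlib

section
/- Let X be a nonempty convex compact subset of a Hausdorff locally convex topological vector space, and K ⊆ X nonempty. A point x ∈ K is Aff(X)-extremal in K (i.e., whenever x is Aff(X)-between two points y, z ∈ K, then y = x and z = x) if and only if x is an extreme point of K in the classical sense (y, z ∈ K, 0 < α < 1, x = αy + (1−α)z implies x = y = z). -/
/-- φ is an affine continuous real function on X. -/
def IsAffOn {S : Type*} [AddCommGroup S] [Module ℝ S] [TopologicalSpace S]
    (X : Set S) (φ : S → ℝ) : Prop :=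
  ContinuousOn φ X ∧ ∀ a ∈ X, ∀ b ∈ X, ∀ t : ℝ, t ∈ Set.Icc (0:ℝ) 1 →
    φ (t • a + (1 - t) • b) = t * φ a + (1 - t) * φ b

/-- x is Aff(X)-between y and z. -/
def AffBetween {S : Type*} [AddCommGroup S] [Module ℝ S] [TopologicalSpace S]
    (X : Set S) (x y z : S) : Prop :=
  ∀ φ : S → ℝ, IsAffOn X φ → φ y ≤ φ x → φ z ≤ φ x → φ x = φ y ∧ φ x = φ z

theorem stmt1 {S : Type*} [AddCommGroup S] [Module ℝ S] [TopologicalSpace S]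
    [IsTopologicalAddGroup S] [ContinuousSMul ℝ S] [LocallyConvexSpace ℝ S] [T2Space S]
    (X : Set S) (hXne : X.Nonempty) (hXconv : Convex ℝ X) (hXcomp : IsCompact X)
    (K : Set S) (hKX : K ⊆ X) (hKne : K.Nonempty)
    (x : S) (hx : x ∈ K) :
    (∀ y ∈ K, ∀ z ∈ K, AffBetween X x y z → y = x ∧ z = x) ↔
      (∀ y ∈ K, ∀ z ∈ K, ∀ α : ℝ, 0 < α → α < 1 →
        x = α • y + (1 - α) • z → x = y ∧ x = z) := by
  constructor
  · intro h y hy z hz α hα0 hα1 hxyz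
    have hres := h y hy z hz ?_
    · exact ⟨hres.1.symm, hres.2.symm⟩
    · intro φ hφ hy' hz'
      have hφx : φ x = α * φ y + (1 - α) * φ z := by
        rw [hxyz]; exact hφ.2 y (hKX hy) z (hKX hz) α ⟨hα0.le, hα1.le⟩
      constructor <;> nlinarith
  · intro h y hy z hz hb
    have haff : ∀ f : S →L[ℝ] ℝ, IsAffOn X f := by
      intro f
      refine ⟨f.continuous.continuousOn, ?_⟩
      intro a _ b _ t _
      simp [map_add, map_smul]
    have hne : ∀ p q : S, p ≠ q → (AffBetween X x y z → False) ∨ True := fun _ _ _ => Or.inr trivial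
    have hyx_of : ∀ p : S, (∀ φ : S → ℝ, IsAffOn X φ → φ p ≤ φ x → φ x = φ p) → p = x := by
      intro p hp
      by_contra hpx
      obtain ⟨f, hf⟩ := geometric_hahn_banach_point_point hpx
      exact absurd (hp f (haff f) hf.le) (ne_of_gt hf)
    have hseg : x ∈ segment ℝ y z := by
      by_contra hxs
      have hconv : Convex ℝ (segment ℝ y z) := convex_segment y z
      have hcomp : IsCompact (segment ℝ y z) := by
        rw [segment_eq_image]
        exact isCompact_Icc.image
          (((continuous_const.sub continuous_id).smul continuous_const).add
            (continuous_id.smul continuous_const))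
      obtain ⟨f, u, hfu, hf⟩ := geometric_hahn_banach_closed_point hconv hcomp.isClosed hxs
      have hyu := hfu y (left_mem_segment ℝ y z)
      have hzu := hfu z (right_mem_segment ℝ y z)
      have := hb f (haff f) (hyu.trans hf).le (hzu.trans hf).le
      linarith [this.1]
    obtain ⟨a, b, ha, hb2, hab, heq⟩ := hseg
    rcases eq_or_lt_of_le ha with ha0 | ha0
    · -- a = 0, so x = z
      have hxz : x = z := by
        rw [← heq, ← ha0]
        have hb1 : b = 1 := by linarith
        simp [hb1]
      refine ⟨hyx_of y ?_, hxz.symm⟩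
      intro φ hφ hle
      exact (hb φ hφ hle (le_of_eq (congrArg φ hxz.symm))).1.symm ▸ rfl
    rcases eq_or_lt_of_le hb2 with hb0 | hb0
    · -- b = 0, so x = y
      have hxy : x = y := by
        rw [← heq, ← hb0]
        have ha1 : a = 1 := by linarith
        simp [ha1]
      refine ⟨hxy.symm, hyx_of z ?_⟩
      intro φ hφ hle
      exact (hb φ hφ (le_of_eq (congrArg φ hxy.symm)) hle).2.symm ▸ rfl
    · have ha1 : a < 1 := by linarith
      have heq' : x = a • y + (1 - a) • z := by
        rw [← heq]; congr 1; rw [show (1 : ℝ) - a = b by linarith]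
      obtain ⟨h1, h2⟩ := h y hy z hz a ha0 ha1 heq'
      exact ⟨h1.symm, h2.symm⟩
end

section
/- Let (K, d) be a compact metric space and Φ ⊆ C(K) a Banach space of continuous functions (with norm ‖·‖_Φ satisfying α‖·‖_Φ ≥ ‖·‖_∞ for some α > 0) that separates points of K. Then for every nonempty closed subset C ⊆ K, the set of Φ-exposed points of C is nonempty: there exist e ∈ C and φ ∈ Φ with φ(e) > φ(x) for all x ∈ C \ {e}. -/
open MeasureTheory Metric
open scoped NNReal ENNReal

lemma aux_level {K : Type*} [MetricSpace K] [CompactSpace K] {C : Set K} (hC : IsCompact C)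
    (hne : C.Nonempty) {ι' : Type*} [Fintype ι'] (f : C(K, ℝ)) (g : ι' → C(K, ℝ))
    (ε : ℝ) (hε : 0 < ε) :
    ∃ t : ι' → ℝ, (∀ i, |t i| < ε) ∧
      ∀ x ∈ C, ∀ y ∈ C,
        (∀ z ∈ C, f z + ∑ i, t i * g i z ≤ f x + ∑ i, t i * g i x) →
        (∀ z ∈ C, f z + ∑ i, t i * g i z ≤ f y + ∑ i, t i * g i y) →
        ∀ i, g i x = g i y := by
  rcases isEmpty_or_nonempty ι' with hempty | hnon
  · exact ⟨0, fun i => isEmptyElim i, fun x _ y _ _ _ i => isEmptyElim i⟩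
  set G : (ι' → ℝ) → K → ℝ := fun t z => f z + ∑ i, t i * g i z with hG
  have hGcont : ∀ t, ContinuousOn (G t) C := by
    intro t
    apply Continuous.continuousOn
    exact f.continuous.add (continuous_finset_sum _ fun i _ =>
      ((g i).continuous.const_smul (t i) : Continuous fun z => t i * g i z))
  have hmax : ∀ t : ι' → ℝ, ∃ x ∈ C, ∀ z ∈ C, G t z ≤ G t x := by
    intro t
    obtain ⟨x, hx, hx2⟩ := hC.exists_isMaxOn hne (hGcont t)
    exact ⟨x, hx, fun z hz => hx2 hz⟩
  choose P hPmem hPmax using hmax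
  set h : (ι' → ℝ) → ℝ := fun t => G t (P t) with hh
  -- G t z ≤ h t for z ∈ C
  have hle : ∀ t, ∀ z ∈ C, G t z ≤ h t := fun t z hz => hPmax t z hz
  -- Lipschitz estimate
  set L : ℝ≥0 := ∑ i, ‖g i‖₊ with hL
  have key : ∀ s t : ι' → ℝ, h s - h t ≤ L * dist s t := by
    intro s t
    have h1 : h s = G s (P s) := rfl
    have h2 : G t (P s) ≤ h t := hle t (P s) (hPmem s)
    have h3 : G s (P s) - G t (P s) ≤ L * dist s t := by
      have : G s (P s) - G t (P s) = ∑ i, (s i - t i) * g i (P s) := by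
        simp only [hG, add_sub_add_left_eq_sub, ← Finset.sum_sub_distrib]
        exact Finset.sum_congr rfl fun i _ => (sub_mul _ _ _).symm
      rw [this]
      calc ∑ i, (s i - t i) * g i (P s) ≤ ∑ i, |(s i - t i) * g i (P s)| :=
            Finset.sum_le_sum fun i _ => le_abs_self _
        _ ≤ ∑ i, dist s t * ‖g i‖ := by
            apply Finset.sum_le_sum
            intro i _
            rw [abs_mul]
            apply mul_le_mul
            · have := norm_le_pi_norm (s - t) i
              simpa [dist_eq_norm, Real.norm_eq_abs] using this
            · exact (g i).norm_coe_le_norm (P s)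
            · exact abs_nonneg _
            · exact dist_nonneg
        _ = (∑ i, ‖g i‖) * dist s t := by
            rw [Finset.sum_mul]
            exact Finset.sum_congr rfl fun i _ => mul_comm _ _
        _ = L * dist s t := by simp [hL, NNReal.coe_sum]
    linarith [h2]
  have hlip : LipschitzWith L h := by
    apply LipschitzWith.of_dist_le_mul
    intro s t
    rw [Real.dist_eq, abs_sub_le_iff]
    exact ⟨key s t, by simpa [dist_comm] using key t s⟩
  -- Rademacher + positive measure ball
  have hae := hlip.ae_differentiableAt_of_real (μ := volume)
  have hball : (0 : ℝ≥0∞) < volume (ball (0 : ι' → ℝ) ε) := measure_ball_pos _ _ hε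
  obtain ⟨t₀, ht₀ball, ht₀diff⟩ : ∃ t₀ ∈ ball (0 : ι' → ℝ) ε, DifferentiableAt ℝ h t₀ := by
    by_contra hcon
    push_neg at hcon
    have : ball (0 : ι' → ℝ) ε ⊆ {x | ¬ DifferentiableAt ℝ h x} := fun x hx => hcon x hx
    have h0 : volume {x : ι' → ℝ | ¬ DifferentiableAt ℝ h x} = 0 := hae
    exact absurd (le_antisymm (h0 ▸ measure_mono this) zero_le) (ne_of_gt hball)
  refine ⟨t₀, ?_, ?_⟩
  · intro i
    have := norm_le_pi_norm t₀ i
    have h2 : ‖t₀‖ < ε := by simpa [dist_eq_norm] using ht₀ball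
    calc |t₀ i| = ‖t₀ i‖ := rfl
      _ ≤ ‖t₀‖ := norm_le_pi_norm t₀ i
      _ < ε := h2
  · -- gradient argument
    classical
    intro x hx y hy hxmax hymax i
    have grad : ∀ w ∈ C, (∀ z ∈ C, G t₀ z ≤ G t₀ w) →
        ∀ j, g j w = (fderiv ℝ h t₀) (Pi.single j 1) := by
      intro w hw hwmax j
      set Lw : (ι' → ℝ) →L[ℝ] ℝ := ∑ j', (g j' w) • (ContinuousLinearMap.proj j') with hLw
      have hAderiv : HasFDerivAt (fun t => G t w) Lw t₀ := by
        have : (fun t : ι' → ℝ => G t w) = fun t => f w + Lw t := by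
          funext t
          simp [hG, hLw, ContinuousLinearMap.sum_apply, ContinuousLinearMap.smul_apply,
            ContinuousLinearMap.proj_apply, mul_comm]
        rw [this]
        simpa using Lw.hasFDerivAt
      have hzero : h t₀ = G t₀ w :=
        le_antisymm (hwmax (P t₀) (hPmem t₀)) (hle t₀ w hw)
      have hmin : IsLocalMin (fun t => h t - G t w) t₀ :=
        Filter.Eventually.of_forall fun t => by
          have := hle t w hw
          simp only [hzero]
          linarith
      have hdiff2 : DifferentiableAt ℝ (fun t => G t w) t₀ := hAderiv.differentiableAt
      have hfz : fderiv ℝ (fun t => h t - G t w) t₀ = 0 := hmin.fderiv_eq_zero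
      rw [fderiv_fun_sub ht₀diff hdiff2, hAderiv.fderiv] at hfz
      have hLweq : fderiv ℝ h t₀ = Lw := sub_eq_zero.mp hfz
      rw [hLweq]
      simp [hLw, ContinuousLinearMap.sum_apply, ContinuousLinearMap.proj_apply,
        Pi.single_apply, Finset.sum_ite_eq', mul_comm]
    rw [grad x hx hxmax i, grad y hy hymax i]


lemma aux_sep {K : Type*} [MetricSpace K] [CompactSpace K]
    {Φ : Type*} [NormedAddCommGroup Φ] [NormedSpace ℝ Φ]
    (ι : Φ →ₗ[ℝ] C(K, ℝ))
    (hsep : ∀ x y : K, x ≠ y → ∃ φ : Φ, ι φ x ≠ ι φ y)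
    {C : Set K} (hCcl : IsClosed C) (r : ℝ) (hr : 0 < r) :
    ∃ s : Finset Φ, ∀ x ∈ C, ∀ y ∈ C, r ≤ dist x y → ∃ φ ∈ s, ι φ x ≠ ι φ y := by
  set P : Set (K × K) := {p | p.1 ∈ C ∧ p.2 ∈ C ∧ r ≤ dist p.1 p.2} with hP
  have hPclosed : IsClosed P := by
    apply IsClosed.inter (hCcl.preimage continuous_fst)
    apply IsClosed.inter (hCcl.preimage continuous_snd)
    exact isClosed_le continuous_const (continuous_dist.comp
      (continuous_fst.prodMk continuous_snd))
  have hPcomp : IsCompact P := hPclosed.isCompact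
  have hcover : P ⊆ ⋃ φ : Φ, {p : K × K | ι φ p.1 ≠ ι φ p.2} := by
    rintro ⟨x, y⟩ ⟨hx, hy, hd⟩
    have hxy : x ≠ y := by
      intro he
      rw [he, dist_self] at hd
      linarith
    obtain ⟨φ, hφ⟩ := hsep x y hxy
    exact Set.mem_iUnion.mpr ⟨φ, hφ⟩
  have hopen : ∀ φ : Φ, IsOpen {p : K × K | ι φ p.1 ≠ ι φ p.2} :=
    fun φ => isOpen_ne_fun ((ι φ).continuous.comp continuous_fst)
      ((ι φ).continuous.comp continuous_snd)
  obtain ⟨s, hs⟩ := hPcomp.elim_finite_subcover _ hopen hcover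
  refine ⟨s, fun x hx y hy hd => ?_⟩
  have : (x, y) ∈ P := ⟨hx, hy, hd⟩
  obtain ⟨φ, hφs, hφ⟩ := Set.mem_iUnion₂.mp (hs this)
  exact ⟨φ, hφs, hφ⟩



theorem stmt4' {K : Type*} [MetricSpace K] [CompactSpace K]
    {Φ : Type*} [NormedAddCommGroup Φ] [NormedSpace ℝ Φ] [CompleteSpace Φ]
    (ι : Φ →ₗ[ℝ] C(K, ℝ))
    (α : ℝ) (hα : 0 < α) (hnorm : ∀ φ : Φ, ‖ι φ‖ ≤ α * ‖φ‖)
    (hsep : ∀ x y : K, x ≠ y → ∃ φ : Φ, ι φ x ≠ ι φ y)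
    (C : Set K) (hCne : C.Nonempty) (hCcl : IsClosed C) :
    ∃ e ∈ C, ∃ φ : Φ, ∀ x ∈ C, x ≠ e → ι φ x < ι φ e := by
  classical
  have hCcomp : IsCompact C := hCcl.isCompact
  set S : Φ → ℝ := fun φ => sSup (ι φ '' C) with hS
  have hbdd : ∀ φ : Φ, BddAbove (ι φ '' C) :=
    fun φ => (hCcomp.image (ι φ).continuous).bddAbove
  have hSle : ∀ φ : Φ, ∀ x ∈ C, ι φ x ≤ S φ :=
    fun φ x hx => le_csSup (hbdd φ) ⟨x, hx, rfl⟩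
  have hSmem : ∀ φ : Φ, ∃ x ∈ C, ι φ x = S φ := by
    intro φ
    obtain ⟨x, hx, hmax⟩ := hCcomp.exists_isMaxOn hCne (ι φ).continuous.continuousOn
    refine ⟨x, hx, le_antisymm (hSle φ x hx) (csSup_le (hCne.image _) ?_)⟩
    rintro _ ⟨z, hz, rfl⟩
    exact hmax hz
  -- uniform closeness
  have hpt : ∀ (φ ψ : Φ) (x : K), |ι φ x - ι ψ x| ≤ α * ‖φ - ψ‖ := by
    intro φ ψ x
    have h1 := (ι (φ - ψ)).norm_coe_le_norm x
    have h2 := hnorm (φ - ψ)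
    rw [map_sub] at h1
    calc |ι φ x - ι ψ x| = ‖(ι φ - ι ψ) x‖ := by simp [ContinuousMap.sub_apply]
      _ ≤ ‖ι φ - ι ψ‖ := h1
      _ ≤ α * ‖φ - ψ‖ := by rw [← map_sub]; exact h2
  have hScl : ∀ φ ψ : Φ, S φ - S ψ ≤ α * ‖φ - ψ‖ := by
    intro φ ψ
    obtain ⟨x, hx, hxe⟩ := hSmem φ
    have h1 := hpt φ ψ x
    have h2 := hSle ψ x hx
    have h3 := abs_le.mp h1
    linarith [h3.2, hxe ▸ le_refl (S φ)]
  -- the good sets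
  set Gs : ℕ → Set Φ := fun n => {φ | ∃ δ > 0, ∀ x ∈ C, ∀ y ∈ C,
      S φ - δ ≤ ι φ x → S φ - δ ≤ ι φ y → dist x y < 1 / (n + 1)} with hGs
  -- openness
  have hopen : ∀ n, IsOpen (Gs n) := by
    intro n
    rw [Metric.isOpen_iff]
    rintro φ ⟨δ, hδ, hδspec⟩
    refine ⟨δ / (3 * α), by positivity, fun ψ hψ => ?_⟩
    rw [mem_ball, dist_eq_norm] at hψ
    have hα3 : α * ‖ψ - φ‖ < δ / 3 := by
      have h0 : α * ‖ψ - φ‖ < α * (δ / (3 * α)) := by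
        exact mul_lt_mul_of_pos_left hψ hα
      have heq3 : α * (δ / (3 * α)) = δ / 3 := by field_simp
      linarith
    refine ⟨δ / 3, by positivity, fun x hx y hy hx2 hy2 => ?_⟩
    apply hδspec x hx y hy
    · have p1 := (abs_le.mp (hpt φ ψ x)).2
      have p2 := (abs_le.mp (hpt φ ψ x)).1
      have p3 := hScl φ ψ
      have p4 := hScl ψ φ
      rw [norm_sub_rev ψ φ] at hα3
      linarith
    · have p1 := (abs_le.mp (hpt φ ψ y)).2
      have p2 := (abs_le.mp (hpt φ ψ y)).1
      have p3 := hScl φ ψ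
      have p4 := hScl ψ φ
      rw [norm_sub_rev ψ φ] at hα3
      linarith
  -- density
  have hdense : ∀ n, Dense (Gs n) := by
    intro n
    rw [Metric.dense_iff]
    intro φ ε hε
    obtain ⟨s, hs⟩ := aux_sep ι hsep hCcl (1 / (n + 1))
      (by positivity)
    set B : ℝ := 1 + ∑ i : {x // x ∈ s}, ‖(i : Φ)‖ with hB
    have hBpos : 0 < B := by
      have : (0:ℝ) ≤ ∑ i : {x // x ∈ s}, ‖(i : Φ)‖ :=
        Finset.sum_nonneg fun i _ => norm_nonneg _
      simp only [hB]; linarith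
    obtain ⟨t, htsmall, htlevel⟩ := aux_level hCcomp hCne (ι φ)
      (fun i : {x // x ∈ s} => ι (i : Φ)) (ε / B) (by positivity)
    set ψ : Φ := ∑ i : {x // x ∈ s}, t i • (i : Φ) with hψdef
    have hψnorm : ‖ψ‖ < ε := by
      calc ‖ψ‖ ≤ ∑ i : {x // x ∈ s}, ‖t i • (i : Φ)‖ := norm_sum_le _ _
        _ = ∑ i : {x // x ∈ s}, |t i| * ‖(i : Φ)‖ := by
            simp [norm_smul, Real.norm_eq_abs]
        _ ≤ ∑ i : {x // x ∈ s}, (ε / B) * ‖(i : Φ)‖ := by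
            apply Finset.sum_le_sum
            intro i _
            exact mul_le_mul_of_nonneg_right (le_of_lt (htsmall i)) (norm_nonneg _)
        _ = (ε / B) * ∑ i : {x // x ∈ s}, ‖(i : Φ)‖ := by rw [Finset.mul_sum]
        _ < (ε / B) * B := by
            apply mul_lt_mul_of_pos_left _ (by positivity)
            simp only [hB]; linarith
        _ = ε := by field_simp
    set φ' : Φ := φ + ψ with hφ'def
    have hval : ∀ z : K, ι φ' z = ι φ z + ∑ i : {x // x ∈ s}, t i * ι (i : Φ) z := by
      intro z
      have hsum : ι ψ = ∑ i : {x // x ∈ s}, t i • ι (i : Φ) := by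
        rw [hψdef, map_sum]
        exact Finset.sum_congr rfl fun i _ => ι.map_smul _ _
      simp only [hφ'def, map_add, ContinuousMap.add_apply, hsum]
      congr 1
      rw [ContinuousMap.coe_sum, Finset.sum_apply]
      exact Finset.sum_congr rfl fun i _ => by simp
    -- F m sets
    set F : ℕ → Set (K × K) := fun m => {p | p.1 ∈ C ∧ p.2 ∈ C ∧
      1 / (n + 1) ≤ dist p.1 p.2 ∧ S φ' - 1 / (m + 1) ≤ ι φ' p.1 ∧
      S φ' - 1 / (m + 1) ≤ ι φ' p.2} with hF
    have hFclosed : ∀ m, IsClosed (F m) := by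
      intro m
      apply IsClosed.inter (hCcl.preimage continuous_fst)
      apply IsClosed.inter (hCcl.preimage continuous_snd)
      apply IsClosed.inter (isClosed_le continuous_const
        (continuous_dist.comp (continuous_fst.prodMk continuous_snd)))
      apply IsClosed.inter
      · exact isClosed_le continuous_const ((ι φ').continuous.comp continuous_fst)
      · exact isClosed_le continuous_const ((ι φ').continuous.comp continuous_snd)
    have hFanti : ∀ m, F (m + 1) ⊆ F m := by
      intro m p hp
      obtain ⟨h1, h2, h3, h4, h5⟩ := hp
      have hmono : 1 / ((m:ℝ) + 1 + 1) ≤ 1 / ((m:ℝ) + 1) := by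
        apply one_div_le_one_div_of_le
        · positivity
        · linarith
      refine ⟨h1, h2, h3, ?_, ?_⟩
      · push_cast at h4 ⊢; linarith
      · push_cast at h5 ⊢; linarith
    have hFempty : ∃ m, ¬ (F m).Nonempty := by
      by_contra hcon
      push_neg at hcon
      have hinter := IsCompact.nonempty_iInter_of_sequence_nonempty_isCompact_isClosed
        F hFanti hcon ((hFclosed 0).isCompact) hFclosed
      obtain ⟨p, hp⟩ := hinter
      have hp0 : ∀ m : ℕ, p ∈ F m := fun m => Set.mem_iInter.mp hp m
      obtain ⟨hp1, hp2, hp3, _, _⟩ := hp0 0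
      -- p.1 and p.2 are maximizers of ι φ'
      have hmax1 : ι φ' p.1 = S φ' := by
        apply le_antisymm (hSle φ' p.1 hp1)
        by_contra hlt
        push_neg at hlt
        obtain ⟨m, hm⟩ := exists_nat_one_div_lt (sub_pos.mpr hlt)
        have := (hp0 m).2.2.2.1
        linarith
      have hmax2 : ι φ' p.2 = S φ' := by
        apply le_antisymm (hSle φ' p.2 hp2)
        by_contra hlt
        push_neg at hlt
        obtain ⟨m, hm⟩ := exists_nat_one_div_lt (sub_pos.mpr hlt)
        have := (hp0 m).2.2.2.2
        linarith
      -- apply level lemma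
      have hlev := htlevel p.1 hp1 p.2 hp2
        (fun z hz => by rw [← hval, ← hval, hmax1]; exact hSle φ' z hz)
        (fun z hz => by rw [← hval, ← hval, hmax2]; exact hSle φ' z hz)
      obtain ⟨φ₀, hφ₀s, hφ₀ne⟩ := hs p.1 hp1 p.2 hp2 hp3
      exact hφ₀ne (hlev ⟨φ₀, hφ₀s⟩)
    obtain ⟨m, hm⟩ := hFempty
    refine ⟨φ', ?_, ?_⟩
    · rw [mem_ball, dist_eq_norm]
      simpa [hφ'def] using hψnorm
    · refine ⟨1 / (m + 1), by positivity, fun x hx y hy hx2 hy2 => ?_⟩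
      by_contra hdxy
      push_neg at hdxy
      exact hm ⟨(x, y), hx, hy, hdxy, hx2, hy2⟩
  -- Baire
  have hd : Dense (⋂ n, Gs n) := dense_iInter_of_isOpen hopen hdense
  obtain ⟨φ, hφ⟩ := hd.nonempty
  obtain ⟨e, he, heval⟩ := hSmem φ
  refine ⟨e, he, φ, fun x hx hxe => ?_⟩
  rcases lt_or_eq_of_le (hSle φ x hx) with hlt | heq
  · rw [← heval] at hlt; exact hlt
  · exfalso
    apply hxe
    have hdist : ∀ n : ℕ, dist x e < 1 / (n + 1) := by
      intro n
      obtain ⟨δ, hδ, hδspec⟩ := Set.mem_iInter.mp hφ n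
      apply hδspec x hx e he
      · rw [heq]; linarith
      · rw [heval]; linarith
    rw [← dist_eq_zero]
    by_contra hd0
    obtain ⟨n, hn⟩ := exists_nat_one_div_lt (lt_of_le_of_ne dist_nonneg (Ne.symm hd0))
    linarith [hdist n]





/-- a is F-between y and z for a family F of real functions. -/
def PhiBetween {K : Type*} (F : Set (K → ℝ)) (a y z : K) : Prop :=
  ∀ φ ∈ F, φ y ≤ φ a → φ z ≤ φ a → φ a = φ y ∧ φ a = φ z

/-- e is an F-extremal point of the set A. -/
def PhiExtremalIn {K : Type*} (F : Set (K → ℝ)) (A : Set K) (e : K) : Prop :=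
  e ∈ A ∧ ∀ y ∈ A, ∀ z ∈ A, PhiBetween F e y z → y = e ∧ z = e

/-- e is an F-exposed point of the set A. -/
def PhiExposedIn {K : Type*} (F : Set (K → ℝ)) (A : Set K) (e : K) : Prop :=
  e ∈ A ∧ ∃ φ ∈ F, ∀ x ∈ A, x ≠ e → φ x < φ e

/-- f is F-convex. -/
def PhiConvex {K : Type*} (F : Set (K → ℝ)) (f : K → ℝ) : Prop :=
  ∀ a x y : K, PhiBetween F a x y → f x ≤ f a → f y ≤ f a →
    f x = f a ∧ f y = f a

/-- the set of maximizers of f over the whole space K. -/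
def Kmax {K : Type*} (f : K → ℝ) : Set K := {x | ∀ y, f y ≤ f x}

/-- the metric of uniform convergence. -/
noncomputable def rho {K : Type*} (f g : K → ℝ) : ℝ :=
  ⨆ x : K, |f x - g x| / (1 + |f x - g x|)

/-- U is open in B for the metric rho. -/
def RhoOpenIn {K : Type*} (B U : Set (K → ℝ)) : Prop :=
  U ⊆ B ∧ ∀ f ∈ U, ∃ ε > 0, ∀ g ∈ B, rho f g < ε → g ∈ U

/-- G is dense in B for the metric rho. -/
def RhoDenseIn {K : Type*} (B G : Set (K → ℝ)) : Prop :=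
  G ⊆ B ∧ ∀ f ∈ B, ∀ ε > 0, ∃ g ∈ G, rho f g < ε

theorem stmt4 {K : Type*} [MetricSpace K] [CompactSpace K] [Nonempty K]
    {Φ : Type*} [NormedAddCommGroup Φ] [NormedSpace ℝ Φ] [CompleteSpace Φ]
    (ι : Φ →ₗ[ℝ] C(K, ℝ)) (hinj : Function.Injective ι)
    (α : ℝ) (hα : 0 < α) (hnorm : ∀ φ : Φ, ‖ι φ‖ ≤ α * ‖φ‖)
    (hsep : ∀ x y : K, x ≠ y → ∃ φ : Φ, ι φ x ≠ ι φ y)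
    (C : Set K) (hCne : C.Nonempty) (hCcl : IsClosed C) :
    ∃ e ∈ C, ∃ φ : Φ, ∀ x ∈ C, x ≠ e → ι φ x < ι φ e :=
  stmt4' ι α hα hnorm hsep C hCne hCcl
end

section
/- Let (K, d) be a compact metric space and Φ ⊆ C(K) a Banach space separating points of K with α‖·‖_Φ ≥ ‖·‖_∞ for some α > 0. Let I be a nonempty index set and for each i ∈ I let f_i : K → ℝ be a Φ-convex upper semicontinuous function. If the intersection of the maximizer sets ⋂_{i∈I} K_max(f_i) is nonempty, then the set of Φ-exposed points of ⋂_{i∈I} K_max(f_i) is nonempty and contained in the set of Φ-extremal points of K; in particular, there is a common Φ-extremal point e of K at which every f_i attains its maximum over K. -/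
open MeasureTheory

universe u v

lemma sepFamily {K : Type u} [MetricSpace K] [CompactSpace K]
    {Φ : Type v} [NormedAddCommGroup Φ] [NormedSpace ℝ Φ]
    (ι : Φ →ₗ[ℝ] C(K, ℝ))
    (hsep : ∀ x y : K, x ≠ y → ∃ φ : Φ, ι φ x ≠ ι φ y)
    (A : Set K) (hA : IsClosed A) (ρ : ℝ) (hρ : 0 < ρ) :
    ∃ (J : Type u) (_ : Fintype J) (ψ : J → Φ) (c : ℝ), 0 < c ∧
      ∀ x ∈ A, ∀ y ∈ A, ρ ≤ dist x y → ∃ j, c ≤ |ι (ψ j) x - ι (ψ j) y| := by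
  classical
  set P : Set (K × K) := {p | (p.1 ∈ A ∧ p.2 ∈ A) ∧ ρ ≤ dist p.1 p.2} with hPdef
  have hPclosed : IsClosed P := by
    apply IsClosed.inter
    · exact (hA.preimage continuous_fst).inter (hA.preimage continuous_snd)
    · exact isClosed_le continuous_const (continuous_fst.dist continuous_snd)
  have hPcompact : IsCompact P := hPclosed.isCompact
  rcases P.eq_empty_or_nonempty with hP | hP
  · refine ⟨PEmpty.{u+1}, inferInstance, PEmpty.elim, 1, one_pos, fun x hx y hy hxy => ?_⟩
    exact absurd (show (x, y) ∈ P from ⟨⟨hx, hy⟩, hxy⟩) (by simp [hP])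
  · have hne : ∀ p : P, (p : K × K).1 ≠ (p : K × K).2 := by
      rintro ⟨p, hp⟩ h
      have h2 := hp.2
      rw [h, dist_self] at h2
      linarith
    choose ψ hψ using fun p : P => hsep _ _ (hne p)
    set c : P → ℝ := fun p => |ι (ψ p) (p : K × K).1 - ι (ψ p) (p : K × K).2| / 2 with hcdef
    have hcpos : ∀ p, 0 < c p := fun p => by
      have := sub_ne_zero_of_ne (hψ p)
      positivity
    set U : P → Set (K × K) := fun p => {q | c p < |ι (ψ p) q.1 - ι (ψ p) q.2|} with hUdef
    have hUopen : ∀ p, IsOpen (U p) := fun p => by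
      apply isOpen_lt continuous_const
      exact (((ι (ψ p)).continuous.comp continuous_fst).sub
        ((ι (ψ p)).continuous.comp continuous_snd)).abs
    have hUcover : P ⊆ ⋃ p : P, U p := by
      intro q hq
      refine Set.mem_iUnion.2 ⟨⟨q, hq⟩, ?_⟩
      have := hcpos ⟨q, hq⟩
      simp only [U, Set.mem_setOf_eq, c] at this ⊢
      linarith
    obtain ⟨t, ht⟩ := hPcompact.elim_finite_subcover U hUopen hUcover
    obtain ⟨p0, hp0⟩ := hP
    have htne : t.Nonempty := by
      rcases Set.mem_iUnion₂.1 (ht hp0) with ⟨p, hpt, -⟩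
      exact ⟨p, hpt⟩
    refine ⟨(t : Set P), inferInstance, fun p => ψ p, t.inf' htne c, ?_, ?_⟩
    · obtain ⟨j, hjt, hj⟩ := t.exists_mem_eq_inf' htne c
      rw [hj]; exact hcpos j
    · intro x hx y hy hxy
      have hmem : (x, y) ∈ P := ⟨⟨hx, hy⟩, hxy⟩
      rcases Set.mem_iUnion₂.1 (ht hmem) with ⟨p, hpt, hpU⟩
      refine ⟨⟨p, hpt⟩, ?_⟩
      have h1 : t.inf' htne c ≤ c p := Finset.inf'_le c hpt
      have h2 : c p < |ι (ψ p) x - ι (ψ p) y| := hpU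
      linarith

lemma denseStep {K : Type u} [MetricSpace K] [CompactSpace K]
    {Φ : Type v} [NormedAddCommGroup Φ] [NormedSpace ℝ Φ]
    (ι : Φ →ₗ[ℝ] C(K, ℝ))
    (hsep : ∀ x y : K, x ≠ y → ∃ φ : Φ, ι φ x ≠ ι φ y)
    (A : Set K) (hA : IsClosed A) (hAne : A.Nonempty)
    (r : ℝ) (hr : 0 < r) (φ0 : Φ) (δ : ℝ) (hδ : 0 < δ) :
    ∃ φ : Φ, ‖φ - φ0‖ < δ ∧ ∃ ε > 0, ∀ x ∈ A, ∀ y ∈ A,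
      (∀ z ∈ A, ι φ z ≤ ι φ x + ε) → (∀ z ∈ A, ι φ z ≤ ι φ y + ε) →
      dist x y ≤ r := by
  classical
  have hAcompact : IsCompact A := hA.isCompact
  set ρ : ℝ := r / 3 with hρdef
  have hρ : 0 < ρ := by positivity
  obtain ⟨J, hJ, ψ, c, hc, hsepJ⟩ := sepFamily ι hsep A hA ρ hρ
  haveI := hJ
  -- constants
  set L : ℝ := ∑ j, ‖ι (ψ j)‖ with hLdef
  have hL0 : 0 ≤ L := Finset.sum_nonneg fun j _ => norm_nonneg _
  set N : ℝ := ∑ j, ‖ψ j‖ with hNdef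
  have hN0 : 0 ≤ N := Finset.sum_nonneg fun j _ => norm_nonneg _
  -- the perturbed family
  set g : (J → ℝ) → K → ℝ := fun t x => ι φ0 x + ∑ j, t j * ι (ψ j) x with hgdef
  have hgcont : ∀ t, Continuous (g t) := fun t =>
    (ι φ0).continuous.add (continuous_finset_sum _ fun j _ =>
      continuous_const.mul (ι (ψ j)).continuous)
  have hbdd : ∀ t, BddAbove (g t '' A) := fun t => (hAcompact.image (hgcont t)).bddAbove
  have himne : ∀ t : J → ℝ, (g t '' A).Nonempty := fun t => hAne.image _
  set V : (J → ℝ) → ℝ := fun t => sSup (g t '' A) with hVdef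
  -- key pointwise bound
  have hgdiff : ∀ (t u : J → ℝ) (x : K), |g t x - g u x| ≤ L * dist t u := by
    intro t u x
    have h1 : g t x - g u x = ∑ j, (t j - u j) * ι (ψ j) x := by
      simp only [g]
      rw [Finset.sum_congr rfl (fun j _ => sub_mul (t j) (u j) ((ι (ψ j)) x)),
        Finset.sum_sub_distrib]
      ring
    rw [h1]
    calc |∑ j, (t j - u j) * ι (ψ j) x| ≤ ∑ j, |(t j - u j) * ι (ψ j) x| :=
          Finset.abs_sum_le_sum_abs _ _
      _ ≤ ∑ j, ‖ι (ψ j)‖ * dist t u := by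
          apply Finset.sum_le_sum
          intro j _
          rw [abs_mul]
          have h2 : |t j - u j| ≤ dist t u := by
            rw [← Real.dist_eq]
            exact dist_le_pi_dist t u j
          have h3 : |ι (ψ j) x| ≤ ‖ι (ψ j)‖ := by
            have := (ι (ψ j)).norm_coe_le_norm x
            simpa using this
          calc |t j - u j| * |ι (ψ j) x| ≤ dist t u * ‖ι (ψ j)‖ :=
              mul_le_mul h2 h3 (abs_nonneg _) dist_nonneg
            _ = ‖ι (ψ j)‖ * dist t u := mul_comm _ _
      _ = L * dist t u := by rw [← Finset.sum_mul]
  -- V is Lipschitz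
  have hVle : ∀ t u : J → ℝ, V t ≤ V u + L * dist t u := by
    intro t u
    apply csSup_le (himne t)
    rintro v ⟨x, hx, rfl⟩
    have h1 : g t x ≤ g u x + L * dist t u := by
      have := hgdiff t u x
      have := abs_le.1 this
      linarith [this.2]
    have h2 : g u x ≤ V u := le_csSup (hbdd u) (Set.mem_image_of_mem _ hx)
    linarith
  have hVlip : LipschitzWith L.toNNReal V := by
    apply LipschitzWith.of_dist_le_mul
    intro t u
    have hcoe : (L.toNNReal : ℝ) = L := Real.coe_toNNReal L hL0
    rw [Real.dist_eq, hcoe, abs_sub_le_iff]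
    constructor
    · have := hVle t u; linarith
    · have := hVle u t; rw [dist_comm] at this; linarith
  -- a differentiability point of V in a small ball
  set δ' : ℝ := δ / (N + 1) with hδ'def
  have hδ' : 0 < δ' := by positivity
  have hball : (volume : Measure (J → ℝ)) (Metric.ball 0 δ') ≠ 0 :=
    (Metric.measure_ball_pos _ _ hδ').ne'
  have hae := hVlip.ae_differentiableAt (μ := (volume : Measure (J → ℝ)))
  have hexists : ∃ t ∈ Metric.ball (0 : J → ℝ) δ', DifferentiableAt ℝ V t := by
    by_contra h
    push_neg at h
    have hsub : Metric.ball (0 : J → ℝ) δ' ⊆ {t | ¬ DifferentiableAt ℝ V t} :=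
      fun t ht => h t ht
    exact hball (measure_mono_null hsub (MeasureTheory.ae_iff.1 hae))
  obtain ⟨t0, ht0ball, ht0diff⟩ := hexists
    -- the perturbed element of Φ
  set φ : Φ := φ0 + ∑ j, t0 j • ψ j with hφdef
  have hφnorm : ‖φ - φ0‖ < δ := by
    have h1 : φ - φ0 = ∑ j, t0 j • ψ j := by simp [φ]
    rw [h1]
    have h2 : ‖∑ j, t0 j • ψ j‖ ≤ ∑ j, ‖t0 j • ψ j‖ := norm_sum_le _ _
    have ht0 : ‖t0‖ < δ' := by rwa [Metric.mem_ball, dist_zero_right] at ht0ball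
    have h3 : ∑ j, ‖t0 j • ψ j‖ ≤ ∑ j, δ' * ‖ψ j‖ := by
      apply Finset.sum_le_sum
      intro j _
      rw [norm_smul]
      exact mul_le_mul_of_nonneg_right (((norm_le_pi_norm t0 j).trans ht0.le)) (norm_nonneg _)
    have h4 : ∑ j, δ' * ‖ψ j‖ = δ' * N := by rw [← Finset.mul_sum]
    have h5 : δ' * N < δ := by
      rw [hδ'def, div_mul_eq_mul_div, div_lt_iff₀ (by positivity : (0:ℝ) < N + 1)]
      nlinarith
    linarith
  have hιφ : ∀ x : K, ι φ x = g t0 x := by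
    intro x
    simp only [φ, map_add, map_sum, _root_.map_smul, g, ContinuousMap.add_apply,
      ContinuousMap.sum_apply, ContinuousMap.smul_apply, smul_eq_mul]
  -- the maximizer set B of g t0 over A
  set B : Set K := {x | x ∈ A ∧ ∀ z ∈ A, g t0 z ≤ g t0 x} with hBdef
  obtain ⟨e, heA, hemax⟩ := hAcompact.exists_isMaxOn hAne (hgcont t0).continuousOn
  have heB : e ∈ B := ⟨heA, fun z hz => hemax hz⟩
  have hBne : B.Nonempty := ⟨e, heB⟩
  have hBclosed : IsClosed B := by
    have hBeq : B = A ∩ ⋂ z ∈ A, {x | g t0 z ≤ g t0 x} := by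
      ext x
      simp only [B, Set.mem_setOf_eq, Set.mem_inter_iff, Set.mem_iInter]
    rw [hBeq]
    exact hA.inter (isClosed_iInter fun z => isClosed_iInter fun _ =>
      isClosed_le continuous_const (hgcont t0))
  have hBcompact : IsCompact B := hBclosed.isCompact
  have hVt0 : ∀ x ∈ B, V t0 = g t0 x := by
    intro x hx
    apply IsGreatest.csSup_eq
    exact ⟨Set.mem_image_of_mem _ hx.1, by rintro v ⟨z, hz, rfl⟩; exact hx.2 z hz⟩
  -- the separating functions are constant on B
  have hconst : ∀ x ∈ B, ∀ j, ι (ψ j) x = (fderiv ℝ V t0) (Pi.single j 1) := by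
    intro x hx j
    set Lx : (J → ℝ) →L[ℝ] ℝ := ∑ i, (ι (ψ i) x) • ContinuousLinearMap.proj i with hLxdef
    have hLxapp : ∀ t : J → ℝ, Lx t = ∑ i, t i * ι (ψ i) x := by
      intro t
      simp [Lx, ContinuousLinearMap.sum_apply, ContinuousLinearMap.smul_apply,
        ContinuousLinearMap.proj_apply, smul_eq_mul, mul_comm]
    have hgx : HasFDerivAt (fun t : J → ℝ => g t x) Lx t0 := by
      have heq : (fun t : J → ℝ => g t x) = fun t => ι φ0 x + Lx t := by
        funext t; rw [hLxapp]
      rw [heq]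
      exact Lx.hasFDerivAt.const_add (ι φ0 x)
    have hmin : IsLocalMin (fun t => V t - g t x) t0 := by
      apply Filter.Eventually.of_forall
      intro t
      have h1 : V t0 = g t0 x := hVt0 x hx
      have h2 : g t x ≤ V t := le_csSup (hbdd t) (Set.mem_image_of_mem _ hx.1)
      simp only [Set.mem_setOf_eq]
      linarith
    have hzero := hmin.fderiv_eq_zero
    have hsub : fderiv ℝ (fun t => V t - g t x) t0 = fderiv ℝ V t0 - Lx := by
      rw [fderiv_fun_sub ht0diff hgx.differentiableAt, hgx.fderiv]
    rw [hsub, sub_eq_zero] at hzero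
    rw [hzero, hLxapp]
    rw [Finset.sum_eq_single j]
    · simp
    · intro i _ hij
      simp [Pi.single_apply, hij]
    · intro h; exact absurd (Finset.mem_univ j) h
  have hBdist : ∀ x ∈ B, ∀ y ∈ B, dist x y < ρ := by
    intro x hx y hy
    by_contra h
    push_neg at h
    obtain ⟨j, hj⟩ := hsepJ x hx.1 y hy.1 h
    rw [hconst x hx j, hconst y hy j] at hj
    simp only [sub_self, abs_zero] at hj
    linarith
  -- choose ε
  set A' : Set K := {x | x ∈ A ∧ ρ ≤ Metric.infDist x B} with hA'def
  have hA'closed : IsClosed A' := by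
    have : A' = A ∩ (fun x => Metric.infDist x B) ⁻¹' Set.Ici ρ := rfl
    rw [this]
    exact hA.inter (isClosed_Ici.preimage (Metric.continuous_infDist_pt B))
  have key : ∃ ε > 0, ∀ x ∈ A, (∀ z ∈ A, ι φ z ≤ ι φ x + ε) → Metric.infDist x B < ρ := by
    rcases A'.eq_empty_or_nonempty with hA' | hA'
    · refine ⟨1, one_pos, fun x hx _ => ?_⟩
      by_contra h
      push_neg at h
      exact absurd (show x ∈ A' from ⟨hx, h⟩) (by simp [hA'])
    · obtain ⟨a', ha'A', hamax⟩ :=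
        hA'closed.isCompact.exists_isMaxOn hA' (hgcont t0).continuousOn
      have ha'notB : a' ∉ B := by
        intro hB
        have h0 : Metric.infDist a' B = 0 := Metric.infDist_zero_of_mem hB
        have := ha'A'.2
        linarith
      have hlt : g t0 a' < g t0 e := by
        have hle : g t0 a' ≤ g t0 e := hemax ha'A'.1
        rcases hle.lt_or_eq with h | h
        · exact h
        · exact absurd ⟨ha'A'.1, fun z hz => h ▸ hemax hz⟩ ha'notB
      refine ⟨(g t0 e - g t0 a') / 2, half_pos (sub_pos.2 hlt), ?_⟩
      intro x hx hxmax
      by_contra h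
      push_neg at h
      have hxA' : x ∈ A' := ⟨hx, h⟩
      have h1 : g t0 x ≤ g t0 a' := hamax hxA'
      have h2 : ι φ e ≤ ι φ x + (g t0 e - g t0 a') / 2 := hxmax e heA
      rw [hιφ, hιφ] at h2
      obtain ⟨u, hu⟩ : ∃ u : ℝ, g t0 a' = u := ⟨_, rfl⟩
      obtain ⟨v, hv⟩ : ∃ v : ℝ, g t0 e = v := ⟨_, rfl⟩
      obtain ⟨w, hw⟩ : ∃ w : ℝ, g t0 x = w := ⟨_, rfl⟩
      rw [hu, hw] at h1
      rw [hu, hv, hw] at h2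
      rw [hu, hv] at hlt
      linarith
  obtain ⟨ε, hε, hεprop⟩ := key
  refine ⟨φ, hφnorm, ε, hε, ?_⟩
  intro x hx y hy hxm hym
  have hxd := hεprop x hx hxm
  have hyd := hεprop y hy hym
  obtain ⟨bx, hbx, hbxd⟩ := hBcompact.exists_infDist_eq_dist hBne x
  obtain ⟨by', hby, hbyd⟩ := hBcompact.exists_infDist_eq_dist hBne y
  have h1 : dist x bx < ρ := by rw [← hbxd]; exact hxd
  have h2 : dist y by' < ρ := by rw [← hbyd]; exact hyd
  have h3 : dist bx by' < ρ := hBdist bx hbx by' hby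
  have h4 : dist x y ≤ dist x bx + dist bx by' + dist by' y := dist_triangle4 x bx by' y
  rw [dist_comm by' y] at h4
  rw [hρdef] at h1 h2 h3
  linarith

lemma exists_exposed {K : Type u} [MetricSpace K] [CompactSpace K]
    {Φ : Type v} [NormedAddCommGroup Φ] [NormedSpace ℝ Φ] [CompleteSpace Φ]
    (ι : Φ →ₗ[ℝ] C(K, ℝ)) (α : ℝ) (hα : 0 < α) (hnorm : ∀ φ : Φ, ‖ι φ‖ ≤ α * ‖φ‖)
    (hsep : ∀ x y : K, x ≠ y → ∃ φ : Φ, ι φ x ≠ ι φ y)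
    (A : Set K) (hA : IsClosed A) (hAne : A.Nonempty) :
    ∃ (φ : Φ) (e : K), e ∈ A ∧ ∀ x ∈ A, x ≠ e → ι φ x < ι φ e := by
  classical
  set G : ℕ → Set Φ := fun n => {φ | ∃ ε > 0, ∀ x ∈ A, ∀ y ∈ A,
    (∀ z ∈ A, ι φ z ≤ ι φ x + ε) → (∀ z ∈ A, ι φ z ≤ ι φ y + ε) →
    dist x y ≤ 1 / (n + 1)} with hGdef
  have hsup : ∀ (φ ψ : Φ) (x : K), |ι φ x - ι ψ x| ≤ α * ‖φ - ψ‖ := by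
    intro φ ψ x
    have h1 : ι φ x - ι ψ x = ι (φ - ψ) x := by rw [map_sub, ContinuousMap.sub_apply]
    rw [h1]
    calc |ι (φ - ψ) x| = ‖ι (φ - ψ) x‖ := rfl
      _ ≤ ‖ι (φ - ψ)‖ := (ι (φ - ψ)).norm_coe_le_norm x
      _ ≤ α * ‖φ - ψ‖ := hnorm _
  have hGopen : ∀ n, IsOpen (G n) := by
    intro n
    rw [Metric.isOpen_iff]
    rintro φ ⟨ε, hε, hφ⟩
    refine ⟨ε / (4 * α), by positivity, ?_⟩
    intro φ' hφ'
    rw [Metric.mem_ball, dist_eq_norm] at hφ'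
    have hclose : ∀ x : K, |ι φ' x - ι φ x| ≤ ε / 4 := by
      intro x
      calc |ι φ' x - ι φ x| ≤ α * ‖φ' - φ‖ := hsup _ _ _
        _ ≤ α * (ε / (4 * α)) := by nlinarith [hφ'.le]
        _ = ε / 4 := by field_simp
    refine ⟨ε / 4, by positivity, ?_⟩
    intro x hx y hy hxm hym
    apply hφ x hx y hy
    · intro z hz
      have h1 := hclose z
      have h2 := hclose x
      have h3 := hxm z hz
      rw [abs_le] at h1 h2
      linarith [h1.1, h1.2, h2.1, h2.2]
    · intro z hz
      have h1 := hclose z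
      have h2 := hclose y
      have h3 := hym z hz
      rw [abs_le] at h1 h2
      linarith [h1.1, h1.2, h2.1, h2.2]
  have hGdense : ∀ n, Dense (G n) := by
    intro n
    rw [Metric.dense_iff]
    intro φ0 δ hδ
    obtain ⟨φ, hφnorm, hφ⟩ := denseStep ι hsep A hA hAne (1 / (n + 1))
      (by positivity) φ0 δ hδ
    exact ⟨φ, Metric.mem_ball.2 (by rwa [dist_eq_norm]), hφ⟩
  have hdense : Dense (⋂ n, G n) := dense_iInter_of_isOpen hGopen hGdense
  obtain ⟨φ, hφ⟩ := hdense.nonempty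
  have hφG : ∀ n, φ ∈ G n := Set.mem_iInter.1 hφ
  have hAcompact : IsCompact A := hA.isCompact
  obtain ⟨e, heA, hemax⟩ := hAcompact.exists_isMaxOn hAne (ι φ).continuous.continuousOn
  refine ⟨φ, e, heA, ?_⟩
  intro x hx hxe
  have hle : ι φ x ≤ ι φ e := hemax hx
  rcases hle.lt_or_eq with h | h
  · exact h
  · exfalso
    apply hxe
    have hdist : ∀ n : ℕ, dist x e ≤ 1 / (n + 1) := by
      intro n
      obtain ⟨ε, hε, hn⟩ := hφG n
      apply hn x hx e heA
      · intro z hz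
        have h2 : ι φ z ≤ ι φ e := hemax hz
        rw [← h] at h2
        linarith
      · intro z hz
        have h2 : ι φ z ≤ ι φ e := hemax hz
        linarith
    by_contra hne
    have hpos : 0 < dist x e := dist_pos.2 hne
    obtain ⟨m, hm⟩ := exists_nat_one_div_lt hpos
    exact absurd (hdist m) (by push_neg; exact_mod_cast hm)

theorem stmt6 {K : Type*} [MetricSpace K] [CompactSpace K] [Nonempty K]
    {Φ : Type*} [NormedAddCommGroup Φ] [NormedSpace ℝ Φ] [CompleteSpace Φ]
    (ι : Φ →ₗ[ℝ] C(K, ℝ)) (hinj : Function.Injective ι)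
    (α : ℝ) (hα : 0 < α) (hnorm : ∀ φ : Φ, ‖ι φ‖ ≤ α * ‖φ‖)
    (hsep : ∀ x y : K, x ≠ y → ∃ φ : Φ, ι φ x ≠ ι φ y)
    (F : Set (K → ℝ)) (hFdef : F = {g | ∃ φ : Φ, g = ⇑(ι φ)})
    {I : Type*} [Nonempty I] (f : I → K → ℝ)
    (husc : ∀ i, UpperSemicontinuous (f i))
    (hconv : ∀ i, PhiConvex F (f i))
    (hne : (⋂ i, Kmax (f i)).Nonempty) :
    (∃ e, PhiExposedIn F (⋂ i, Kmax (f i)) e) ∧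
    (∀ e, PhiExposedIn F (⋂ i, Kmax (f i)) e → PhiExtremalIn F Set.univ e) ∧
    ∃ e, PhiExtremalIn F Set.univ e ∧ ∀ i, ∀ y, f i y ≤ f i e := by
  classical
  have hKmaxclosed : ∀ i, IsClosed (Kmax (f i)) := by
    intro i
    have h1 : Kmax (f i) = ⋂ y, {x | f i y ≤ f i x} := by
      ext x; simp [Kmax, Set.mem_iInter]
    rw [h1]
    apply isClosed_iInter
    intro y
    have h2 : {x | f i y ≤ f i x} = {x | f i x < f i y}ᶜ := by
      ext x; simp [not_lt]
    rw [h2]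
    have hopen : IsOpen {x | f i x < f i y} := by
      rw [isOpen_iff_mem_nhds]
      intro x hx
      exact husc i x (f i y) hx
    exact hopen.isClosed_compl
  have hAclosed : IsClosed (⋂ i, Kmax (f i)) := isClosed_iInter hKmaxclosed
  obtain ⟨φ0, e0, he0A, he0⟩ := exists_exposed ι α hα hnorm hsep _ hAclosed hne
  have hexp : PhiExposedIn F (⋂ i, Kmax (f i)) e0 :=
    ⟨he0A, ⟨⇑(ι φ0), by rw [hFdef]; exact ⟨φ0, rfl⟩, he0⟩⟩
  have hmain : ∀ e, PhiExposedIn F (⋂ i, Kmax (f i)) e → PhiExtremalIn F Set.univ e := by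
    rintro e ⟨heA, g, hgF, hg⟩
    refine ⟨Set.mem_univ e, ?_⟩
    intro y _ z _ hbet
    have heK : ∀ i, e ∈ Kmax (f i) := fun i => Set.mem_iInter.1 heA i
    have hyA : y ∈ ⋂ i, Kmax (f i) := by
      apply Set.mem_iInter.2
      intro i
      have h := (hconv i) e y z hbet (heK i y) (heK i z)
      intro w
      rw [h.1]
      exact heK i w
    have hzA : z ∈ ⋂ i, Kmax (f i) := by
      apply Set.mem_iInter.2
      intro i
      have h := (hconv i) e y z hbet (heK i y) (heK i z)
      intro w
      rw [h.2]
      exact heK i w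
    have hgy : g y ≤ g e := by
      by_cases hye : y = e
      · rw [hye]
      · exact (hg y hyA hye).le
    have hgz : g z ≤ g e := by
      by_cases hze : z = e
      · rw [hze]
      · exact (hg z hzA hze).le
    obtain ⟨h1, h2⟩ := hbet g hgF hgy hgz
    constructor
    · by_contra hye
      exact absurd h1.symm (ne_of_lt (hg y hyA hye))
    · by_contra hze
      exact absurd h2.symm (ne_of_lt (hg z hzA hze))
  refine ⟨⟨e0, hexp⟩, hmain, e0, hmain e0 hexp, ?_⟩
  intro i y
  exact Set.mem_iInter.1 he0A i y
end

section
/- Let (K, d) be a compact metric space and Φ a family of continuous functions on K. Let (f_i)_{i∈I} be Φ-convex upper semicontinuous functions on K with ⋂_{i∈I} K_max(f_i) ≠ ∅. Then every Φ-extremal point of ⋂_{i∈I} K_max(f_i) is a Φ-extremal point of K. -/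
theorem stmt7 {K : Type*} [MetricSpace K] [CompactSpace K]
    (F : Set (K → ℝ)) (hF : ∀ φ ∈ F, Continuous φ)
    {I : Type*} [Nonempty I] (f : I → K → ℝ)
    (husc : ∀ i, UpperSemicontinuous (f i))
    (hconv : ∀ i, PhiConvex F (f i))
    (hne : (⋂ i, Kmax (f i)).Nonempty) :
    ∀ e, PhiExtremalIn F (⋂ i, Kmax (f i)) e → PhiExtremalIn F Set.univ e := by
  rintro e ⟨heA, hext⟩
  refine ⟨Set.mem_univ e, fun y _ z _ hb => ?_⟩
  have hmem : ∀ w : K, (∀ i, f i w = f i e) → w ∈ ⋂ i, Kmax (f i) := by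
    intro w hw
    refine Set.mem_iInter.2 fun i x => ?_
    rw [hw i]
    exact Set.mem_iInter.1 heA i x
  have hy : ∀ i, f i y = f i e ∧ f i z = f i e := fun i =>
    (hconv i) e y z hb (Set.mem_iInter.1 heA i y) (Set.mem_iInter.1 heA i z)
  exact hext y (hmem y fun i => (hy i).1) z (hmem z fun i => (hy i).2) hb
end

section
/- Let (K, d) be a compact metric space and B a set of upper semicontinuous real functions on K, equipped with ρ_∞(f,g) = sup_x |f(x)−g(x)|/(1+|f(x)−g(x)|). For each n ≥ 1, the set O_n = {f ∈ B : ∃ x_n ∈ K, f(x_n) > sup{f(x) : d(x, x_n) ≥ 1/n}} is open in (B, ρ_∞), and ⋂_{n≥1} O_n = {f ∈ B : f has a unique (strict) maximum on K}. -/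
/-- An upper semicontinuous function attains its max on a nonempty closed
subset of a compact space. -/
lemma usc_exists_max {K : Type*} [TopologicalSpace K] [CompactSpace K]
    {f : K → ℝ} (hf : UpperSemicontinuous f) {A : Set K} (hA : IsClosed A)
    (hne : A.Nonempty) : ∃ p ∈ A, ∀ x ∈ A, f x ≤ f p := by
  have hι : Nonempty A := hne.to_subtype
  set t : A → Set K := fun y => A ∩ f ⁻¹' Set.Ici (f y) with ht
  have htcl : ∀ y, IsClosed (t y) := fun y =>
    hA.inter (hf.isClosed_preimage (f y))
  have htd : Directed (· ⊇ ·) t := by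
    intro y z
    rcases le_total (f y) (f z) with h | h
    · exact ⟨z, fun x hx => ⟨hx.1, le_trans h hx.2⟩, fun x hx => hx⟩
    · exact ⟨y, fun x hx => hx, fun x hx => ⟨hx.1, le_trans h hx.2⟩⟩
  have htn : ∀ y, (t y).Nonempty := fun y => ⟨y, y.2, by simp⟩
  have htc : ∀ y, IsCompact (t y) := fun y => (htcl y).isCompact
  obtain ⟨p, hp⟩ := IsCompact.nonempty_iInter_of_directed_nonempty_isCompact_isClosed
    t htd htn htc htcl
  simp only [Set.mem_iInter] at hp
  refine ⟨p, (hp ⟨hne.choose, hne.choose_spec⟩).1, fun x hx => (hp ⟨x, hx⟩).2⟩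

lemma rho_lt_imp {K : Type*} (f g : K → ℝ) {δ : ℝ} (hδ : 0 < δ)
    (h : rho f g < δ / (1 + δ)) : ∀ x, |f x - g x| < δ := by
  intro x
  have hb : BddAbove (Set.range fun x : K => |f x - g x| / (1 + |f x - g x|)) := by
    refine ⟨1, ?_⟩
    rintro _ ⟨y, rfl⟩
    have h1 : (0 : ℝ) < 1 + |f y - g y| := by positivity
    rw [div_le_one h1]
    linarith [abs_nonneg (f y - g y)]
  have hle : |f x - g x| / (1 + |f x - g x|) ≤ rho f g := le_ciSup hb x
  have hlt : |f x - g x| / (1 + |f x - g x|) < δ / (1 + δ) := lt_of_le_of_lt hle h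
  have h1 : (0 : ℝ) < 1 + |f x - g x| := by positivity
  have h2 : (0 : ℝ) < 1 + δ := by linarith
  rw [div_lt_div_iff₀ h1 h2] at hlt
  nlinarith [abs_nonneg (f x - g x)]

theorem stmt9 {K : Type*} [MetricSpace K] [CompactSpace K] [Nonempty K]
    (B : Set (K → ℝ)) (hB : ∀ f ∈ B, UpperSemicontinuous f)
    (O : ℕ → Set (K → ℝ))
    (hOdef : ∀ n, O n = {f ∈ B | ∃ x₀ : K,
      ∀ x : K, (1 : ℝ) / n ≤ dist x x₀ → f x < f x₀}) :
    (∀ n : ℕ, 1 ≤ n → RhoOpenIn B (O n)) ∧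
      (⋂ n ∈ {n : ℕ | 1 ≤ n}, O n) =
        {f ∈ B | ∃ x₀ : K, ∀ x : K, x ≠ x₀ → f x < f x₀} := by
  constructor
  · -- openness
    intro n _
    rw [hOdef n]
    constructor
    · exact fun f hf => hf.1
    · rintro f ⟨hfB, x₀, hx₀⟩
      set A : Set K := {x | (1 : ℝ) / n ≤ dist x x₀} with hA
      have hAclosed : IsClosed A :=
        isClosed_le continuous_const (continuous_id.dist continuous_const)
      by_cases hAe : A.Nonempty
      · obtain ⟨p, hpA, hp⟩ := usc_exists_max (hB f hfB) hAclosed hAe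
        have hlt : f p < f x₀ := hx₀ p hpA
        set δ : ℝ := (f x₀ - f p) / 2 with hδdef
        have hδ : 0 < δ := by simp only [hδdef]; linarith
        refine ⟨δ / (1 + δ), by positivity, fun g hgB hrg => ?_⟩
        have hbd := rho_lt_imp f g hδ hrg
        refine ⟨hgB, x₀, fun x hx => ?_⟩
        have h1 : |f x - g x| < δ := hbd x
        have h2 : |f x₀ - g x₀| < δ := hbd x₀
        have h3 : f x ≤ f p := hp x hx
        have h4 := abs_lt.1 h1
        have h5 := abs_lt.1 h2
        have hfx : f x₀ = f p + 2 * δ := by simp only [hδdef]; ring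
        linarith
      · -- A empty : condition is vacuous
        refine ⟨1, one_pos, fun g hgB _ => ⟨hgB, x₀, fun x hx => ?_⟩⟩
        exact absurd hx (fun h => hAe ⟨x, h⟩)
  · -- intersection
    ext f
    simp only [Set.mem_iInter, Set.mem_setOf_eq, Set.mem_sep_iff]
    constructor
    · intro hf
      have hf1 := hf 1 le_rfl
      rw [hOdef 1] at hf1
      have hfB : f ∈ B := hf1.1
      have hx : ∀ n : ℕ, 1 ≤ n → ∃ xn : K,
          ∀ x : K, (1 : ℝ) / n ≤ dist x xn → f x < f xn := by
        intro n hn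
        have h := hf n hn
        rw [hOdef n] at h
        exact h.2
      choose! xn hxn using hx
      obtain ⟨p, _, hp⟩ := usc_exists_max (hB f hfB) isClosed_univ
        Set.univ_nonempty
      refine ⟨hfB, p, fun x hx => ?_⟩
      have hdp : ∀ n : ℕ, 1 ≤ n → dist p (xn n) < 1 / n := by
        intro n hn
        by_contra hcon
        push_neg at hcon
        exact absurd (hp (xn n) trivial) (not_le.2 (hxn n hn p hcon))
      have hdxp : 0 < dist x p := dist_pos.2 hx
      obtain ⟨n, hn⟩ := exists_nat_gt (2 / dist x p)
      have hn1 : 1 ≤ n := by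
        rcases Nat.eq_zero_or_pos n with h | h
        · subst h
          exfalso
          have : (0:ℝ) < 2 / dist x p := by positivity
          simp at hn
          linarith
        · exact h
      have hnpos : (0 : ℝ) < n := by exact_mod_cast hn1
      have h2n : 2 / (n : ℝ) < dist x p := by
        rw [div_lt_iff₀ hnpos]
        have h1 := (div_lt_iff₀ hdxp).1 hn
        nlinarith
      have hdist : (1 : ℝ) / n ≤ dist x (xn n) := by
        have h1 := hdp n hn1
        have htri : dist x p ≤ dist x (xn n) + dist p (xn n) :=
          dist_triangle_right x p (xn n)
        have h2 : 2 / (n : ℝ) = 1 / n + 1 / n := by ring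
        linarith
      exact lt_of_lt_of_le (hxn n hn1 x hdist) (hp (xn n) trivial)
    · rintro ⟨hfB, x₀, hx₀⟩ n hn
      rw [hOdef n]
      refine ⟨hfB, x₀, fun x hx => ?_⟩
      refine hx₀ x (fun h => ?_)
      subst h
      have hnpos : (0 : ℝ) < n := by exact_mod_cast hn
      simp only [dist_self] at hx
      have : (0:ℝ) < 1 / n := by positivity
      linarith
end

section
/- Let X be a nonempty convex compact metrizable subset of a Hausdorff locally convex topological vector space, and K ⊆ X a nonempty closed subset (not necessarily convex). Then K has an affine exposed point, i.e., there exist e ∈ K and a continuous affine function φ : X → ℝ with φ(e) > φ(x) for all x ∈ K \ {e}; moreover every affine exposed point of K is an extreme point of K. -/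
/-- x is an extreme point of K in the classical sense. -/
def ExtremeIn {S : Type*} [AddCommGroup S] [Module ℝ S]
    (K : Set S) (x : S) : Prop :=
  x ∈ K ∧ ∀ y ∈ K, ∀ z ∈ K, ∀ α : ℝ, 0 < α → α < 1 →
    x = α • y + (1 - α) • z → x = y ∧ x = z

/-- the set of maximizers of f over K. -/
def KmaxOn {S : Type*} (K : Set S) (f : S → ℝ) : Set S :=
  {x ∈ K | ∀ y ∈ K, f y ≤ f x}

theorem stmt12 {S : Type*} [AddCommGroup S] [Module ℝ S] [TopologicalSpace S]
    [IsTopologicalAddGroup S] [ContinuousSMul ℝ S] [LocallyConvexSpace ℝ S] [T2Space S]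
    (X : Set S) (hXne : X.Nonempty) (hXconv : Convex ℝ X) (hXcomp : IsCompact X)
    (hXmet : TopologicalSpace.MetrizableSpace X)
    (K : Set S) (hKX : K ⊆ X) (hKne : K.Nonempty) (hKcl : IsClosed K) :
    (∃ e ∈ K, ∃ φ : S → ℝ, IsAffOn X φ ∧ ∀ x ∈ K, x ≠ e → φ x < φ e) ∧
    (∀ e ∈ K, (∃ φ : S → ℝ, IsAffOn X φ ∧ ∀ x ∈ K, x ≠ e → φ x < φ e) →
      ExtremeIn K e) := by
  constructor
  · -- Existence of an affine exposed point
    haveI : CompactSpace ↥X := isCompact_iff_compactSpace.mp hXcomp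
    -- Step 1: a countable separating family of continuous linear functionals on X
    have sep : ∃ L : ℕ → (S →L[ℝ] ℝ), ∀ x ∈ X, ∀ y ∈ X, x ≠ y → ∃ n, L n x ≠ L n y := by
      set U : (S →L[ℝ] ℝ) → Set (↥X × ↥X) := fun ℓ => {p | ℓ p.1.1 ≠ ℓ p.2.1} with hU
      have hUopen : ∀ ℓ, IsOpen (U ℓ) :=
        fun ℓ => isOpen_ne_fun (ℓ.continuous.comp (continuous_subtype_val.comp continuous_fst))
          (ℓ.continuous.comp (continuous_subtype_val.comp continuous_snd))
      obtain ⟨T, hTc, hTU⟩ := TopologicalSpace.isOpen_iUnion_countable U hUopen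
      obtain ⟨L, hL⟩ := (hTc.insert 0).exists_eq_range (Set.insert_nonempty _ _)
      refine ⟨L, fun x hx y hy hxy => ?_⟩
      have hmem : (⟨⟨x, hx⟩, ⟨y, hy⟩⟩ : ↥X × ↥X) ∈ ⋃ ℓ, U ℓ := by
        obtain ⟨f, hf⟩ := geometric_hahn_banach_point_point hxy
        exact Set.mem_iUnion.2 ⟨f, ne_of_lt hf⟩
      rw [← hTU] at hmem
      obtain ⟨ℓ, hℓT, hℓ⟩ := Set.mem_iUnion₂.1 hmem
      have : ℓ ∈ Set.range L := hL ▸ Set.mem_insert_of_mem _ hℓT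
      obtain ⟨n, rfl⟩ := this
      exact ⟨n, hℓ⟩
    obtain ⟨L, hLsep⟩ := sep
    -- Step 2: bounds and normalization
    have hbd : ∀ n : ℕ, ∃ C : ℝ, 0 < C ∧ ∀ x ∈ X, |L n x| ≤ C := by
      intro n
      obtain ⟨C, hC⟩ := hXcomp.exists_bound_of_continuousOn (L n).continuous.continuousOn
      exact ⟨max C 1, lt_of_lt_of_le one_pos (le_max_right _ _),
        fun x hx => le_trans (by simpa using hC x hx) (le_max_left _ _)⟩
    choose C hCpos hC using hbd
    set c : ℕ → ℝ := fun n => (1/2 : ℝ)^n / C n with hc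
    have hcpos : ∀ n, 0 < c n := fun n => div_pos (pow_pos one_half_pos n) (hCpos n)
    set u : ℕ → S → ℝ := fun n x => c n * L n x with hu
    have hubd : ∀ n, ∀ x ∈ X, |u n x| ≤ (1/2 : ℝ)^n := by
      intro n x hx
      rw [hu]
      have : |c n * L n x| = c n * |L n x| := by
        rw [abs_mul, abs_of_pos (hcpos n)]
      rw [this, hc]
      calc (1/2 : ℝ)^n / C n * |L n x| ≤ (1/2 : ℝ)^n / C n * C n :=
            mul_le_mul_of_nonneg_left (hC n x hx) (le_of_lt (hcpos n))
        _ = (1/2 : ℝ)^n := div_mul_cancel₀ _ (ne_of_gt (hCpos n))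
    have hgeo : Summable (fun n : ℕ => ((1/2 : ℝ)^n)^2) := by
      have : (fun n : ℕ => ((1/2 : ℝ)^n)^2) = fun n : ℕ => ((1/4 : ℝ))^n := by
        funext n; rw [← pow_mul, pow_mul']; norm_num
      rw [this]
      exact summable_geometric_of_lt_one (by norm_num) (by norm_num)
    -- summability of products
    have hsummul : ∀ x ∈ X, ∀ y ∈ X, Summable (fun n => u n x * u n y) := by
      intro x hx y hy
      apply Summable.of_norm_bounded hgeo
      intro n
      rw [Real.norm_eq_abs, abs_mul, sq]
      exact mul_le_mul (hubd n x hx) (hubd n y hy) (abs_nonneg _)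
        (le_of_lt (pow_pos one_half_pos n))
    have hsumsq : ∀ x ∈ X, Summable (fun n => (u n x)^2) := by
      intro x hx
      have : (fun n => (u n x)^2) = fun n => u n x * u n x := by funext n; ring
      rw [this]; exact hsummul x hx x hx
    -- Step 3: maximize f(x) = ∑ (u n x)^2 over K
    set f : S → ℝ := fun x => ∑' n, (u n x)^2 with hf
    have hfcont : ContinuousOn f X := by
      apply continuousOn_tsum (u := fun n : ℕ => ((1/2 : ℝ)^n)^2) _ hgeo
      · intro n x hx
        rw [Real.norm_eq_abs, abs_pow]
        exact pow_le_pow_left₀ (abs_nonneg _) (hubd n x hx) 2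
      · intro n
        exact (((L n).continuous.const_smul (c n)).pow 2).continuousOn
    have hKcomp : IsCompact K := IsCompact.of_isClosed_subset hXcomp hKcl hKX
    obtain ⟨e, heK, hemax⟩ := hKcomp.exists_isMaxOn hKne (hfcont.mono hKX)
    have heX : e ∈ X := hKX heK
    -- the exposing affine (linear) functional
    set φ : S → ℝ := fun x => ∑' n, 2 * u n e * u n x with hφ
    have hφsum : ∀ x ∈ X, Summable (fun n => 2 * u n e * u n x) := by
      intro x hx
      have : (fun n => 2 * u n e * u n x) = fun n => 2 * (u n e * u n x) := by
        funext n; ring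
      rw [this]
      exact (hsummul e heX x hx).mul_left 2
    refine ⟨e, heK, φ, ⟨?_, ?_⟩, ?_⟩
    · -- continuity of φ on X
      apply continuousOn_tsum (u := fun n : ℕ => 2 * ((1/2 : ℝ)^n)^2) _ (hgeo.mul_left 2)
      · intro n x hx
        rw [Real.norm_eq_abs, abs_mul, abs_mul, abs_two, sq]
        have h1 : |u n e| ≤ (1/2 : ℝ)^n := hubd n e heX
        have h2 : |u n x| ≤ (1/2 : ℝ)^n := hubd n x hx
        have hp : (0:ℝ) ≤ (1/2 : ℝ)^n := le_of_lt (pow_pos one_half_pos n)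
        nlinarith [abs_nonneg (u n e), abs_nonneg (u n x)]
      · intro n
        exact (continuous_const.mul ((L n).continuous.const_smul (c n))).continuousOn
    · -- affineness of φ on X
      intro a ha b hb t ht
      have hlin : ∀ n, u n (t • a + (1 - t) • b) = t * u n a + (1 - t) * u n b := by
        intro n
        simp only [hu, map_add, map_smul, smul_eq_mul]
        ring
      have h1 : Summable (fun n => t * (2 * u n e * u n a)) :=
        (hφsum a ha).mul_left t
      have h2 : Summable (fun n => (1 - t) * (2 * u n e * u n b)) :=
        (hφsum b hb).mul_left (1 - t)
      calc φ (t • a + (1 - t) • b)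
          = ∑' n, (t * (2 * u n e * u n a) + (1 - t) * (2 * u n e * u n b)) := by
            apply tsum_congr; intro n; rw [hlin n]; ring
        _ = (∑' n, t * (2 * u n e * u n a)) + ∑' n, (1 - t) * (2 * u n e * u n b) :=
            Summable.tsum_add h1 h2
        _ = t * φ a + (1 - t) * φ b := by rw [tsum_mul_left, tsum_mul_left]
    · -- strict maximality
      intro x hxK hxe
      have hxX : x ∈ X := hKX hxK
      obtain ⟨n0, hn0⟩ := hLsep x hxX e heX hxe
      have hune : u n0 x ≠ u n0 e := by
        intro h
        exact hn0 (mul_left_cancel₀ (ne_of_gt (hcpos n0)) h)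
      have hsd : Summable (fun n => (u n x - u n e)^2) := by
        have : (fun n => (u n x - u n e)^2)
            = fun n => ((u n x)^2 - 2 * (u n e * u n x)) + (u n e)^2 := by
          funext n; ring
        rw [this]
        exact ((hsumsq x hxX).sub ((hsummul e heX x hxX).mul_left 2)).add (hsumsq e heX)
      have hpos : 0 < ∑' n, (u n x - u n e)^2 :=
        Summable.tsum_pos hsd (fun n => sq_nonneg _) n0 (lt_of_le_of_ne (sq_nonneg _) (Ne.symm (pow_ne_zero 2 (sub_ne_zero.mpr hune))))
      have hexpand : ∑' n, (u n x - u n e)^2 = f x - φ x + f e := by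
        calc ∑' n, (u n x - u n e)^2
            = ∑' n, (((u n x)^2 - 2 * u n e * u n x) + (u n e)^2) := by
              apply tsum_congr; intro n; ring
          _ = (∑' n, ((u n x)^2 - 2 * u n e * u n x)) + ∑' n, (u n e)^2 :=
              Summable.tsum_add ((hsumsq x hxX).sub (hφsum x hxX)) (hsumsq e heX)
          _ = ((∑' n, (u n x)^2) - ∑' n, 2 * u n e * u n x) + ∑' n, (u n e)^2 := by
              rw [Summable.tsum_sub (hsumsq x hxX) (hφsum x hxX)]
          _ = f x - φ x + f e := rfl
      have hφe : φ e = 2 * f e := by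
        calc φ e = ∑' n, 2 * (u n e)^2 := by
              apply tsum_congr; intro n; ring_nf
          _ = 2 * f e := tsum_mul_left
      have hfle : f x ≤ f e := hemax hxK
      rw [hexpand] at hpos
      rw [hφe]
      linarith
  · -- Every affine exposed point is extreme
    rintro e heK ⟨φ, ⟨hφc, hφaff⟩, hφmax⟩
    refine ⟨heK, fun y hy z hz α hα0 hα1 heq => ?_⟩
    have hyX := hKX hy
    have hzX := hKX hz
    have hE : φ e = α * φ y + (1 - α) * φ z := by
      rw [heq]; exact hφaff y hyX z hzX α ⟨le_of_lt hα0, le_of_lt hα1⟩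
    have hφy : φ y ≤ φ e := by
      rcases eq_or_ne y e with rfl | h
      · exact le_refl _
      · exact le_of_lt (hφmax y hy h)
    have hφz : φ z ≤ φ e := by
      rcases eq_or_ne z e with rfl | h
      · exact le_refl _
      · exact le_of_lt (hφmax z hz h)
    have hy' : y = e := by
      by_contra h
      have h1 : φ y < φ e := hφmax y hy h
      nlinarith
    have hz' : z = e := by
      by_contra h
      have h1 : φ z < φ e := hφmax z hz h
      nlinarith
    exact ⟨hy'.symm, hz'.symm⟩
end

section
/- Let X be a nonempty convex compact metrizable subset of a Hausdorff locally convex topological vector space, K ⊆ X nonempty closed, I a nonempty set, and for each i ∈ I let f_i : K → ℝ be an upper semicontinuous Aff(X)-convex function. If ⋂_{i∈I} K_max(f_i) ≠ ∅, then AExp(⋂_{i∈I} K_max(f_i)) ∩ Ext(K) ≠ ∅; in particular there is a common extreme point e of K at which every f_i attains its maximum over K. -/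
open Filter Topology

/-- restriction of an upper semicontinuous function is upper semicontinuous. -/
lemma usc_restrict_aux {S : Type*} [TopologicalSpace S] {f : S → ℝ} {K : Set S}
    (h : UpperSemicontinuousOn f K) : UpperSemicontinuous (K.restrict f) := by
  intro x y hy
  have h1 := h x x.2 y hy
  have h2 : ∀ᶠ z in Filter.map (Subtype.val : K → S) (𝓝 x), f z < y := by
    rwa [map_nhds_subtype_val]
  exact h2

/-- the set of maximizers of an u.s.c. function over a compact set is compact. -/
lemma kmax_compact_aux {S : Type*} [TopologicalSpace S] [T2Space S] {K : Set S} {g : S → ℝ}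
    (hKcomp : IsCompact K) (h : UpperSemicontinuousOn g K) : IsCompact (KmaxOn K g) := by
  haveI : CompactSpace K := isCompact_iff_compactSpace.mp hKcomp
  set T : Set K := ⋂ y : K, (K.restrict g) ⁻¹' Set.Ici (g ↑y) with hT
  have hTcl : IsClosed T := isClosed_iInter fun y => (usc_restrict_aux h).isClosed_preimage _
  have hTcomp : IsCompact T := hTcl.isCompact
  have heq : KmaxOn K g = Subtype.val '' T := by
    ext x
    constructor
    · rintro ⟨hxK, hmax⟩
      exact ⟨⟨x, hxK⟩, Set.mem_iInter.2 fun y => hmax y y.2, rfl⟩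
    · rintro ⟨⟨x', hx'⟩, hxT, rfl⟩
      exact ⟨hx', fun y hy => Set.mem_iInter.1 hxT ⟨y, hy⟩⟩
  rw [heq]
  exact hTcomp.image continuous_subtype_val

/-- a countable uniformly bounded family of continuous linear functionals separating
points of a compact metrizable set. -/
lemma exists_sep_seq_aux {S : Type*} [AddCommGroup S] [Module ℝ S] [TopologicalSpace S]
    [IsTopologicalAddGroup S] [ContinuousSMul ℝ S] [LocallyConvexSpace ℝ S] [T2Space S]
    (X : Set S) (hXcomp : IsCompact X) (hXmet : TopologicalSpace.MetrizableSpace X) :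
    ∃ h : ℕ → (S →L[ℝ] ℝ), (∀ n, ∀ x ∈ X, |h n x| ≤ (1/2:ℝ)^n) ∧
      (∀ x ∈ X, ∀ y ∈ X, x ≠ y → ∃ n, h n x ≠ h n y) := by
  haveI : CompactSpace X := isCompact_iff_compactSpace.mp hXcomp
  haveI := hXmet
  set ρ : (S →L[ℝ] ℝ) → C(X, ℝ) :=
    fun g => ContinuousMap.restrict X ⟨g, g.continuous⟩ with hρ
  set A : Set C(X, ℝ) := Set.range ρ with hA
  haveI : SecondCountableTopology C(X, ℝ) := UniformSpace.secondCountable_of_separable _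
  obtain ⟨s, hs_count, hs_dense⟩ := TopologicalSpace.exists_countable_dense A
  have hAne : A.Nonempty := ⟨ρ 0, Set.mem_range_self 0⟩
  haveI : Nonempty A := hAne.to_subtype
  have hsne : s.Nonempty := hs_dense.nonempty
  set D : Set C(X, ℝ) := Subtype.val '' s with hD
  have hDc : D.Countable := hs_count.image _
  have hDne : D.Nonempty := hsne.image _
  obtain ⟨F, hF⟩ := hDc.exists_eq_range hDne
  have hmem : ∀ n, ∃ g : S →L[ℝ] ℝ, ρ g = F n := by
    intro n
    have h1 : F n ∈ D := by rw [hF]; exact Set.mem_range_self n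
    obtain ⟨v, hv, hveq⟩ := h1
    have h2 : (v : C(X, ℝ)) ∈ A := v.2
    obtain ⟨g, hg⟩ := h2
    exact ⟨g, by rw [hg, hveq]⟩
  choose g hg using hmem
  refine ⟨fun n => ((1/2:ℝ)^n / (1 + ‖F n‖)) • g n, ?_, ?_⟩
  · intro n x hx
    have hFn : (0:ℝ) < 1 + ‖F n‖ := by positivity
    have h1 : |g n x| ≤ ‖F n‖ := by
      have h2 := (F n).norm_coe_le_norm ⟨x, hx⟩
      have h3 : (F n) ⟨x, hx⟩ = g n x := by rw [← hg n]; rfl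
      rw [h3] at h2
      simpa using h2
    have h4 : (((1/2:ℝ)^n / (1 + ‖F n‖)) • g n) x = ((1/2:ℝ)^n / (1 + ‖F n‖)) * g n x := rfl
    rw [h4, abs_mul, abs_of_nonneg (by positivity)]
    rw [div_mul_eq_mul_div, div_le_iff₀ hFn]
    have h5 : (0:ℝ) ≤ (1/2:ℝ)^n := by positivity
    nlinarith [abs_nonneg (g n x)]
  · intro x hx y hy hxy
    obtain ⟨ψ, hψ⟩ := geometric_hahn_banach_point_point (E := S) hxy
    set ε : ℝ := (ψ y - ψ x)/2 with hεdef
    have hε : 0 < ε := by simp only [hεdef]; linarith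
    have hρψ : ρ ψ ∈ A := Set.mem_range_self ψ
    have hcl : (⟨ρ ψ, hρψ⟩ : A) ∈ closure s := hs_dense _
    rw [Metric.mem_closure_iff] at hcl
    obtain ⟨v, hvs, hvd⟩ := hcl ε hε
    rw [Subtype.dist_eq] at hvd
    have hvD : (v : C(X, ℝ)) ∈ D := ⟨v, hvs, rfl⟩
    rw [hF] at hvD
    obtain ⟨n, hn⟩ := hvD
    have hdist : dist (ρ ψ) (F n) < ε := by rw [hn]; exact hvd
    refine ⟨n, ?_⟩
    have hc : (0:ℝ) < (1/2:ℝ)^n / (1 + ‖F n‖) := by positivity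
    have key : g n x ≠ g n y := by
      intro heq
      have e1 : |ψ x - g n x| ≤ dist (ρ ψ) (F n) := by
        have h6 := ContinuousMap.dist_apply_le_dist (f := ρ ψ) (g := F n) ⟨x, hx⟩
        have h7 : (ρ ψ) ⟨x, hx⟩ = ψ x := rfl
        have h8 : (F n) ⟨x, hx⟩ = g n x := by rw [← hg n]; rfl
        rw [h7, h8, Real.dist_eq] at h6
        exact h6
      have e2 : |ψ y - g n y| ≤ dist (ρ ψ) (F n) := by
        have h6 := ContinuousMap.dist_apply_le_dist (f := ρ ψ) (g := F n) ⟨y, hy⟩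
        have h7 : (ρ ψ) ⟨y, hy⟩ = ψ y := rfl
        have h8 : (F n) ⟨y, hy⟩ = g n y := by rw [← hg n]; rfl
        rw [h7, h8, Real.dist_eq] at h6
        exact h6
      have e3 : ψ y - ψ x = (ψ y - g n y) + (g n x - ψ x) := by rw [heq]; ring
      have e4 : ψ y - g n y ≤ |ψ y - g n y| := le_abs_self _
      have e5 : g n x - ψ x ≤ |ψ x - g n x| := by
        rw [abs_sub_comm]; exact le_abs_self _
      simp only [hεdef] at hdist
      linarith
    intro heq
    apply key
    have h9 : (((1/2:ℝ)^n / (1 + ‖F n‖)) • g n) x = ((1/2:ℝ)^n / (1 + ‖F n‖)) * g n x := rfl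
    have h10 : (((1/2:ℝ)^n / (1 + ‖F n‖)) • g n) y = ((1/2:ℝ)^n / (1 + ‖F n‖)) * g n y := rfl
    rw [h9, h10] at heq
    exact mul_left_cancel₀ (ne_of_gt hc) heq

theorem stmt13 {S : Type*} [AddCommGroup S] [Module ℝ S] [TopologicalSpace S]
    [IsTopologicalAddGroup S] [ContinuousSMul ℝ S] [LocallyConvexSpace ℝ S] [T2Space S]
    (X : Set S) (hXne : X.Nonempty) (hXconv : Convex ℝ X) (hXcomp : IsCompact X)
    (hXmet : TopologicalSpace.MetrizableSpace X)
    (K : Set S) (hKX : K ⊆ X) (hKne : K.Nonempty) (hKcl : IsClosed K)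
    {I : Type*} [Nonempty I] (f : I → S → ℝ)
    (husc : ∀ i, UpperSemicontinuousOn (f i) K)
    (hconv : ∀ i, ∀ a ∈ K, ∀ x ∈ K, ∀ y ∈ K, a ∈ segment ℝ x y →
      f i x ≤ f i a → f i y ≤ f i a → f i x = f i a ∧ f i y = f i a)
    (hne : (⋂ i, KmaxOn K (f i)).Nonempty) :
    ∃ e ∈ ⋂ i, KmaxOn K (f i),
      (∃ φ : S → ℝ, IsAffOn X φ ∧
        ∀ x ∈ ⋂ i, KmaxOn K (f i), x ≠ e → φ x < φ e) ∧
      ExtremeIn K e := by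
  classical
  obtain ⟨p, hp⟩ := hne
  set M : Set S := ⋂ i, KmaxOn K (f i) with hMdef
  have hKcomp : IsCompact K := hXcomp.of_isClosed_subset hKcl hKX
  have hMK : M ⊆ K := fun x hx =>
    (Set.mem_iInter.1 hx (Classical.arbitrary I)).1
  have hMX : M ⊆ X := fun x hx => hKX (hMK hx)
  -- M is compact
  have hMcomp : IsCompact M := by
    have h1 : ∀ i, IsCompact (KmaxOn K (f i)) := fun i => kmax_compact_aux hKcomp (husc i)
    have h2 : IsClosed M := isClosed_iInter fun i => (h1 i).isClosed
    exact IsCompact.of_isClosed_subset (h1 (Classical.arbitrary I)) h2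
      (Set.iInter_subset _ _)
  -- separating sequence
  obtain ⟨h, hbd, hsep⟩ := exists_sep_seq_aux X hXcomp hXmet
  -- summability facts
  have hgeo : Summable fun n : ℕ => (1/2:ℝ)^n :=
    summable_geometric_of_lt_one (by norm_num) (by norm_num)
  have hsq : ∀ x ∈ X, ∀ y ∈ X, Summable fun n => (h n x - h n y)^2 := by
    intro x hx y hy
    apply Summable.of_nonneg_of_le (fun n => sq_nonneg _) (fun n => ?_) (hgeo.mul_left 4)
    have b1 := hbd n x hx
    have b2 := hbd n y hy
    have b3 : (0:ℝ) ≤ (1/2:ℝ)^n := by positivity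
    have b4 : ((1/2:ℝ))^n ≤ 1 := pow_le_one₀ (by norm_num) (by norm_num)
    have b6 : |h n x - h n y| ≤ 2 * (1/2:ℝ)^n :=
      (abs_sub _ _).trans (by linarith)
    have b7 := mul_self_le_mul_self (abs_nonneg (h n x - h n y)) b6
    nlinarith [sq_abs (h n x - h n y)]
  have hsqb : ∀ x ∈ X, ∀ y ∈ X, ∀ n, (h n x - h n y)^2 ≤ 4 * (1/2:ℝ)^n := by
    intro x hx y hy n
    have b1 := hbd n x hx
    have b2 := hbd n y hy
    have b3 : (0:ℝ) ≤ (1/2:ℝ)^n := by positivity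
    have b4 : ((1/2:ℝ))^n ≤ 1 := pow_le_one₀ (by norm_num) (by norm_num)
    have b6 : |h n x - h n y| ≤ 2 * (1/2:ℝ)^n :=
      (abs_sub _ _).trans (by linarith)
    have b7 := mul_self_le_mul_self (abs_nonneg (h n x - h n y)) b6
    nlinarith [sq_abs (h n x - h n y)]
  -- squared distance function
  set D : S → S → ℝ := fun x y => ∑' n, (h n x - h n y)^2 with hDdef
  have hDcont : ∀ y ∈ X, ContinuousOn (fun x => D x y) X := by
    intro y hy
    apply continuousOn_tsum (u := fun n => 4 * (1/2:ℝ)^n)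
    · intro n
      exact (((h n).continuous.sub continuous_const).pow 2).continuousOn
    · exact hgeo.mul_left 4
    · intro n x hx
      rw [Real.norm_eq_abs, abs_of_nonneg (sq_nonneg _)]
      exact hsqb x hx y hy n
  have hDnonneg : ∀ x ∈ X, ∀ y ∈ X, 0 ≤ D x y := fun x hx y hy =>
    tsum_nonneg fun n => sq_nonneg _
  have hDpos : ∀ x ∈ X, ∀ y ∈ X, x ≠ y → 0 < D x y := by
    intro x hx y hy hxy
    obtain ⟨n, hn⟩ := hsep x hx y hy hxy
    exact Summable.tsum_pos (hsq x hx y hy) (fun m => sq_nonneg _) n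
      (sq_pos_of_ne_zero (sub_ne_zero.mpr hn))
  -- maximize D · p over M
  obtain ⟨e, heM, hemax⟩ := hMcomp.exists_isMaxOn ⟨p, hp⟩
    (((hDcont p (hMX hp))).mono hMX)
  have heX : e ∈ X := hMX heM
  have heK : e ∈ K := hMK heM
  -- the affine functional
  set φ : S → ℝ := fun x => ∑' n, (h n e - h n p) * h n x with hφdef
  have hprodb : ∀ x ∈ X, ∀ n, |(h n e - h n p) * h n x| ≤ 2 * (1/2:ℝ)^n := by
    intro x hx n
    have b1 := hbd n e heX
    have b2 := hbd n p (hMX hp)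
    have b3 := hbd n x hx
    have b4 : ((1/2:ℝ))^n ≤ 1 := pow_le_one₀ (by norm_num) (by norm_num)
    have b5 : (0:ℝ) ≤ (1/2:ℝ)^n := by positivity
    rw [abs_mul]
    have b6 : |h n e - h n p| ≤ 2 * (1/2:ℝ)^n := by
      calc |h n e - h n p| ≤ |h n e| + |h n p| := abs_sub _ _
        _ ≤ 2 * (1/2:ℝ)^n := by linarith
    nlinarith [abs_nonneg (h n e - h n p), abs_nonneg (h n x)]
  have hφsum : ∀ x ∈ X, Summable fun n => (h n e - h n p) * h n x := by
    intro x hx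
    apply Summable.of_norm
    apply Summable.of_nonneg_of_le (fun n => norm_nonneg _) (fun n => ?_) (hgeo.mul_left 2)
    rw [Real.norm_eq_abs]
    exact hprodb x hx n
  -- key identity : 2 * (φ x - φ p) = D x p + D e p - D x e for x ∈ X
  have hkey : ∀ x ∈ X, 2 * (φ x - φ p) = D x p + D e p - D x e := by
    intro x hx
    have s1 := hφsum x hx
    have s2 := hφsum p (hMX hp)
    have s3 := hsq x hx p (hMX hp)
    have s4 := hsq e heX p (hMX hp)
    have s5 := hsq x hx e heX
    have e1 : φ x - φ p = ∑' n, ((h n e - h n p) * h n x - (h n e - h n p) * h n p) :=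
      (Summable.tsum_sub s1 s2).symm
    have e2 : 2 * (φ x - φ p)
        = ∑' n, 2 * ((h n e - h n p) * h n x - (h n e - h n p) * h n p) := by
      rw [e1, tsum_mul_left]
    have e3 : ∀ n, 2 * ((h n e - h n p) * h n x - (h n e - h n p) * h n p)
        = ((h n x - h n p)^2 + (h n e - h n p)^2) - (h n x - h n e)^2 := by
      intro n; ring
    rw [e2]
    calc ∑' n, 2 * ((h n e - h n p) * h n x - (h n e - h n p) * h n p)
        = ∑' n, (((h n x - h n p)^2 + (h n e - h n p)^2) - (h n x - h n e)^2) := by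
          exact tsum_congr e3
      _ = (∑' n, ((h n x - h n p)^2 + (h n e - h n p)^2)) - ∑' n, (h n x - h n e)^2 :=
          Summable.tsum_sub (s3.add s4) s5
      _ = ((∑' n, (h n x - h n p)^2) + ∑' n, (h n e - h n p)^2) - ∑' n, (h n x - h n e)^2 := by
          rw [Summable.tsum_add s3 s4]
      _ = D x p + D e p - D x e := rfl
  have hDee : D e e = 0 := by
    simp [hDdef]
  -- strict maximality of φ at e over M
  have hstrict : ∀ x ∈ M, x ≠ e → φ x < φ e := by
    intro x hxM hxe
    have hxX : x ∈ X := hMX hxM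
    have k1 := hkey x hxX
    have k2 := hkey e heX
    rw [hDee] at k2
    have k3 : D x p ≤ D e p := hemax hxM
    have k4 : 0 < D x e := hDpos x hxX e heX hxe
    linarith
  -- continuity of φ on X
  have hφcont : ContinuousOn φ X := by
    apply continuousOn_tsum (u := fun n => 2 * (1/2:ℝ)^n)
    · intro n
      exact (continuous_const.mul (h n).continuous).continuousOn
    · exact hgeo.mul_left 2
    · intro n x hx
      rw [Real.norm_eq_abs]
      exact hprodb x hx n
  -- affinity of φ on X
  have hφaff : ∀ a ∈ X, ∀ b ∈ X, ∀ t : ℝ, t ∈ Set.Icc (0:ℝ) 1 →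
      φ (t • a + (1 - t) • b) = t * φ a + (1 - t) * φ b := by
    intro a ha b hb t ht
    have s1 := hφsum a ha
    have s2 := hφsum b hb
    have e1 : ∀ n, (h n e - h n p) * h n (t • a + (1 - t) • b)
        = t * ((h n e - h n p) * h n a) + (1 - t) * ((h n e - h n p) * h n b) := by
      intro n
      have : h n (t • a + (1 - t) • b) = t * h n a + (1 - t) * h n b := by
        rw [map_add, map_smul, map_smul]
        simp [smul_eq_mul]
      rw [this]; ring
    calc φ (t • a + (1 - t) • b)
        = ∑' n, (t * ((h n e - h n p) * h n a) + (1 - t) * ((h n e - h n p) * h n b)) :=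
          tsum_congr e1
      _ = (∑' n, t * ((h n e - h n p) * h n a))
          + ∑' n, (1 - t) * ((h n e - h n p) * h n b) :=
          Summable.tsum_add (s1.mul_left t) (s2.mul_left (1 - t))
      _ = t * φ a + (1 - t) * φ b := by
          rw [s1.tsum_mul_left t, s2.tsum_mul_left (1 - t)]
  -- extremality of e in K
  have hext : ExtremeIn K e := by
    refine ⟨heK, ?_⟩
    intro y hy z hz α hα0 hα1 heq
    have hseg : e ∈ segment ℝ y z := ⟨α, 1 - α, le_of_lt hα0, by linarith, by ring, heq.symm⟩
    have hyM : y ∈ M := by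
      rw [hMdef, Set.mem_iInter]
      intro i
      have he_i : e ∈ KmaxOn K (f i) := Set.mem_iInter.1 heM i
      have hfy : f i y ≤ f i e := he_i.2 y hy
      have hfz : f i z ≤ f i e := he_i.2 z hz
      have := hconv i e heK y hy z hz hseg hfy hfz
      exact ⟨hy, fun w hw => by rw [this.1]; exact he_i.2 w hw⟩
    have hzM : z ∈ M := by
      rw [hMdef, Set.mem_iInter]
      intro i
      have he_i : e ∈ KmaxOn K (f i) := Set.mem_iInter.1 heM i
      have hfy : f i y ≤ f i e := he_i.2 y hy
      have hfz : f i z ≤ f i e := he_i.2 z hz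
      have := hconv i e heK y hy z hz hseg hfy hfz
      exact ⟨hz, fun w hw => by rw [this.2]; exact he_i.2 w hw⟩
    have hφe : φ e = α * φ y + (1 - α) * φ z := by
      rw [heq]
      exact hφaff y (hKX hy) z (hKX hz) α ⟨le_of_lt hα0, le_of_lt hα1⟩
    by_cases hye : y = e
    · by_cases hze : z = e
      · exact ⟨hye.symm, hze.symm⟩
      · exfalso
        have h1 : φ z < φ e := hstrict z hzM hze
        rw [hye] at hφe
        nlinarith
    · exfalso
      have h1 : φ y < φ e := hstrict y hyM hye
      have h2 : φ z ≤ φ e := by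
        by_cases hze : z = e
        · rw [hze]
        · exact le_of_lt (hstrict z hzM hze)
      nlinarith
  exact ⟨e, heM, ⟨φ, ⟨hφcont, hφaff⟩, hstrict⟩, hext⟩
end

section
/- Let X be a nonempty convex compact metrizable subset of a Hausdorff locally convex topological vector space, and I a nonempty set. If f_i : X → ℝ are strictly quasi-convex upper semicontinuous functions for i ∈ I with ⋂_{i∈I} X_max(f_i) ≠ ∅, then there exists a common extreme point e of X such that f_i(e) = max_X f_i for all i ∈ I. -/
theorem stmt14 {S : Type*} [AddCommGroup S] [Module ℝ S] [TopologicalSpace S]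
    [IsTopologicalAddGroup S] [ContinuousSMul ℝ S] [LocallyConvexSpace ℝ S] [T2Space S]
    (X : Set S) (hXne : X.Nonempty) (hXconv : Convex ℝ X) (hXcomp : IsCompact X)
    (hXmet : TopologicalSpace.MetrizableSpace X)
    {I : Type*} [Nonempty I] (f : I → S → ℝ)
    (husc : ∀ i, UpperSemicontinuousOn (f i) X)
    (hqc : ∀ i, ∀ y ∈ X, ∀ z ∈ X, y ≠ z → ∀ t : ℝ, 0 < t → t < 1 →
      f i (t • y + (1 - t) • z) < max (f i y) (f i z))
    (hne : (⋂ i, KmaxOn X (f i)).Nonempty) :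
    ∃ e, ExtremeIn X e ∧ ∀ i, ∀ y ∈ X, f i y ≤ f i e := by
  obtain ⟨e, he⟩ := hne
  have hmax : ∀ i, e ∈ KmaxOn X (f i) := by
    intro i; exact Set.mem_iInter.mp he i
  obtain ⟨i0⟩ := (inferInstance : Nonempty I)
  have heX : e ∈ X := (hmax i0).1
  refine ⟨e, ⟨heX, ?_⟩, fun i y hy => (hmax i).2 y hy⟩
  intro y hy z hz α hα0 hα1 heq
  by_cases hyz : y = z
  · subst hyz
    have : α • y + (1 - α) • y = y := by
      rw [← add_smul]; ring_nf; exact one_smul ℝ y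
    rw [heq, this]; exact ⟨rfl, rfl⟩
  · exfalso
    have h1 := hqc i0 y hy z hz hyz α hα0 hα1
    rw [← heq] at h1
    have h2 : max (f i0 y) (f i0 z) ≤ f i0 e :=
      max_le ((hmax i0).2 y hy) ((hmax i0).2 z hz)
    exact absurd (lt_of_lt_of_le h1 h2) (lt_irrefl _)
end

section
/- (Bauer's maximum principle, metrizable case) Let X be a nonempty convex compact metrizable subset of a Hausdorff locally convex topological vector space, and f : X → ℝ convex and upper semicontinuous. Then f attains its maximum at an extreme point of X: X_max(f) ∩ Ext(X) ≠ ∅. -/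
theorem stmt15 {S : Type*} [AddCommGroup S] [Module ℝ S] [TopologicalSpace S]
    [IsTopologicalAddGroup S] [ContinuousSMul ℝ S] [LocallyConvexSpace ℝ S] [T2Space S]
    (X : Set S) (hXne : X.Nonempty) (hXconv : Convex ℝ X) (hXcomp : IsCompact X)
    (hXmet : TopologicalSpace.MetrizableSpace X)
    (f : S → ℝ) (hf : ConvexOn ℝ X f) (husc : UpperSemicontinuousOn f X) :
    ∃ e, ExtremeIn X e ∧ ∀ y ∈ X, f y ≤ f e := by
  haveI : CompactSpace X := isCompact_iff_compactSpace.mp hXcomp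
  -- restriction of f to the subtype is upper semicontinuous
  have hres : UpperSemicontinuous fun x : X => f x := by
    intro x c hc
    have h := husc x x.2 c hc
    rw [← map_nhds_subtype_val] at h
    exact h
  -- f attains its maximum on X
  obtain ⟨m, hm⟩ : ∃ m ∈ X, ∀ y ∈ X, f y ≤ f m := by
    obtain ⟨x0, hx0⟩ := hXne
    have key : (Set.univ ∩ ⋂ y : X, {x : X | f y ≤ f x}).Nonempty := by
      apply isCompact_univ.inter_iInter_nonempty
      · intro y
        have : IsOpen {x : X | f (x : S) < f (y : S)} :=
          hres.isOpen_preimage (f (y : S))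
        have := this.isClosed_compl
        convert this using 1
        ext x
        simp [not_lt]
      · intro u
        rcases u.eq_empty_or_nonempty with h | h
        · exact ⟨⟨x0, hx0⟩, by simp [h]⟩
        · obtain ⟨b, hb, hbmax⟩ := u.exists_max_image (fun x : X => f x) h
          refine ⟨b, Set.mem_inter (Set.mem_univ _) ?_⟩
          simp only [Set.mem_iInter]
          intro y hy
          exact hbmax y hy
    obtain ⟨m, -, hm⟩ := key
    refine ⟨m, m.2, fun y hy => ?_⟩
    have := Set.mem_iInter.mp hm ⟨y, hy⟩
    exact this
  obtain ⟨hmX, hmmax⟩ := hm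
  -- the set of maximizers
  set M : Set S := {x ∈ X | ∀ y ∈ X, f y ≤ f x} with hM
  have hMne : M.Nonempty := ⟨m, hmX, hmmax⟩
  have hMsub : M ⊆ X := fun x hx => hx.1
  -- M is compact
  have hMcomp : IsCompact M := by
    have hC : IsClosed {x : X | f m ≤ f (x : S)} := by
      have : IsOpen {x : X | f (x : S) < f m} := hres.isOpen_preimage (f m)
      have := this.isClosed_compl
      convert this using 1
      ext x; simp [not_lt]
    have hCc : IsCompact {x : X | f m ≤ f (x : S)} := hC.isCompact
    have himg : M = Subtype.val '' {x : X | f m ≤ f (x : S)} := by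
      ext x
      constructor
      · rintro ⟨hxX, hxmax⟩
        exact ⟨⟨x, hxX⟩, hxmax m hmX, rfl⟩
      · rintro ⟨⟨x, hxX⟩, hx, rfl⟩
        exact ⟨hxX, fun y hy => le_trans (hmmax y hy) hx⟩
    rw [himg]
    exact hCc.image continuous_subtype_val
  -- M is an extreme subset of X
  have hMext : IsExtreme ℝ X M := by
    refine ⟨hMsub, fun x1 h1 x2 h2 x hxM hseg => ?_⟩
    obtain ⟨a, b, ha, hb, hab, rfl⟩ := hseg
    have hconv := hf.2 h1 h2 ha.le hb.le hab
    simp only [smul_eq_mul] at hconv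
    have hx1 : f x1 ≤ f (a • x1 + b • x2) := hxM.2 x1 h1
    have hx2 : f x2 ≤ f (a • x1 + b • x2) := hxM.2 x2 h2
    have he1 : f x1 = f (a • x1 + b • x2) := by
      by_contra h
      have hlt : f x1 < f (a • x1 + b • x2) := lt_of_le_of_ne hx1 h
      have h1' : a * f x1 + b * f x2 < a * f (a • x1 + b • x2) + b * f (a • x1 + b • x2) :=
        add_lt_add_of_lt_of_le (mul_lt_mul_of_pos_left hlt ha)
          (mul_le_mul_of_nonneg_left hx2 hb.le)
      have h2' : a * f (a • x1 + b • x2) + b * f (a • x1 + b • x2) = f (a • x1 + b • x2) := by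
        rw [← add_mul, hab, one_mul]
      linarith
    have he2 : f x2 = f (a • x1 + b • x2) := by
      by_contra h
      have hlt : f x2 < f (a • x1 + b • x2) := lt_of_le_of_ne hx2 h
      have h1' : a * f x1 + b * f x2 < a * f (a • x1 + b • x2) + b * f (a • x1 + b • x2) :=
        add_lt_add_of_le_of_lt (mul_le_mul_of_nonneg_left hx1 ha.le)
          (mul_lt_mul_of_pos_left hlt hb)
      have h2' : a * f (a • x1 + b • x2) + b * f (a • x1 + b • x2) = f (a • x1 + b • x2) := by
        rw [← add_mul, hab, one_mul]
      linarith
    exact ⟨h1, fun y hy => he1 ▸ hxM.2 y hy⟩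
  -- Krein–Milman lemma gives an extreme point of M, which is an extreme point of X
  obtain ⟨e, he⟩ := hMcomp.extremePoints_nonempty hMne
  have heX : e ∈ X.extremePoints ℝ := hMext.extremePoints_subset_extremePoints he
  refine ⟨e, ⟨heX.1, fun y hy z hz α hα hα1 heq => ?_⟩, (he.1).2⟩
  have : e ∈ openSegment ℝ y z := ⟨α, 1 - α, hα, by linarith, by ring, heq.symm⟩
  obtain ⟨h1, h2⟩ := (mem_extremePoints.mp heX).2 y hy z hz this
  exact ⟨h1.symm, h2.symm⟩
end

section
/- Let X be a nonempty convex compact metrizable subset of a Hausdorff locally convex topological vector space, and let B be the space of all convex continuous functions from X to ℝ equipped with the metric ρ_∞(f,g) = sup_x |f(x)−g(x)|/(1+|f(x)−g(x)|). Then {f ∈ B : f attains its maximum on X at exactly one point, and this point is an extreme point of X} is a dense G_δ subset of (B, ρ_∞). -/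
/-- the metric of uniform convergence on X. -/
noncomputable def rhoOn {S : Type*} (X : Set S) (f g : S → ℝ) : ℝ :=
  ⨆ x : X, |f x - g x| / (1 + |f x - g x|)

open Set
open scoped ENNReal
set_option maxHeartbeats 1000000
set_option synthInstance.maxHeartbeats 400000

section rho

variable {S : Type*} {X : Set S} {f g : S → ℝ}

lemma rhoOn_le (hne : X.Nonempty) {δ : ℝ} (h : ∀ x ∈ X, |f x - g x| ≤ δ) :
    rhoOn X f g ≤ δ := by
  have : Nonempty X := hne.to_subtype
  refine ciSup_le fun x => ?_
  have h1 : (0:ℝ) ≤ |f x - g x| := abs_nonneg _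
  have h2 : |f x - g x| / (1 + |f x - g x|) ≤ |f x - g x| := by
    rw [div_le_iff₀ (by linarith)]
    nlinarith
  exact h2.trans (h x x.2)

lemma rhoOn_lt_pointwise {ε : ℝ} (hε1 : ε < 1) (h : rhoOn X f g < ε)
    {x : S} (hx : x ∈ X) : |f x - g x| < ε / (1 - ε) := by
  have : Nonempty X := ⟨⟨x, hx⟩⟩
  have hbdd : BddAbove (Set.range fun x : X => |f x - g x| / (1 + |f x - g x|)) := by
    refine ⟨1, ?_⟩
    rintro r ⟨y, rfl⟩
    have h1 : (0:ℝ) ≤ |f y - g y| := abs_nonneg _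
    rw [div_le_one (by linarith)]; linarith
  have hle : |f x - g x| / (1 + |f x - g x|) ≤ rhoOn X f g :=
    le_ciSup hbdd (⟨x, hx⟩ : X)
  have h1 : (0:ℝ) ≤ |f x - g x| := abs_nonneg _
  have h3 : |f x - g x| / (1 + |f x - g x|) < ε := lt_of_le_of_lt hle h
  rw [div_lt_iff₀ (by linarith)] at h3
  rw [lt_div_iff₀ (by linarith)]
  nlinarith

end rho

lemma strictmax_extremeIn {S : Type*} [AddCommGroup S] [Module ℝ S] [TopologicalSpace S]
    {X : Set S} {f : S → ℝ} (hconv : ConvexOn ℝ X f) {e : S} (he : e ∈ X)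
    (hmax : ∀ y ∈ X, y ≠ e → f y < f e) : ExtremeIn X e := by
  have hle : ∀ w ∈ X, f w ≤ f e := by
    intro w hw
    rcases eq_or_ne w e with rfl | hne
    · exact le_refl _
    · exact (hmax w hw hne).le
  refine ⟨he, fun y hy z hz α hα0 hα1 heq => ?_⟩
  have hsum : α + (1 - α) = 1 := by ring
  have hconv' : f (α • y + (1 - α) • z) ≤ α * f y + (1 - α) * f z :=
    hconv.2 hy hz hα0.le (by linarith) hsum
  have hye : y = e := by
    by_contra hne
    have h1 : f y < f e := hmax y hy hne
    have h2 : f z ≤ f e := hle z hz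
    rw [← heq] at hconv'
    nlinarith
  subst hye
  have hze : (1 - α) • (z - y) = 0 := by
    have h2 : α • y + (1 - α) • z - y = (1-α) • (z - y) := by
      rw [smul_sub, sub_smul, sub_smul, one_smul, one_smul]
      abel
    rw [← h2, ← heq]
    abel
  have hz' : z - y = 0 := by
    rcases smul_eq_zero.mp hze with h | h
    · exfalso; linarith [h]  -- 1 - α = 0 contradicts α < 1
    · exact h
  have : z = y := by
    have := sub_eq_zero.mp hz'
    exact this
  exact ⟨rfl, this.symm⟩


lemma exists_sep_family {S : Type*} [AddCommGroup S] [Module ℝ S] [TopologicalSpace S]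
    [IsTopologicalAddGroup S] [ContinuousSMul ℝ S] [LocallyConvexSpace ℝ S] [T2Space S]
    (X : Set S) (hXne : X.Nonempty) (hXcomp : IsCompact X)
    (hXmet : TopologicalSpace.MetrizableSpace X) :
    ∃ L : ℕ → S →L[ℝ] ℝ, (∀ k, ∀ x ∈ X, |L k x| ≤ (1/2 : ℝ)^k) ∧
      (∀ x ∈ X, ∀ y ∈ X, x ≠ y → ∃ k, L k x ≠ L k y) := by
  haveI : CompactSpace X := isCompact_iff_compactSpace.mp hXcomp
  letI : MetricSpace X := TopologicalSpace.metrizableSpaceMetric X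
  haveI : SecondCountableTopology (X × X) := by infer_instance
  -- the open sets
  set U : (S →L[ℝ] ℝ) → Set (X × X) := fun φ => {p | φ (p.1 : S) ≠ φ (p.2 : S)} with hU
  have hUopen : ∀ φ, IsOpen (U φ) := by
    intro φ
    have hc : Continuous fun p : X × X => φ (p.1 : S) - φ (p.2 : S) :=
      ((φ.continuous.comp continuous_subtype_val).comp continuous_fst).sub
        ((φ.continuous.comp continuous_subtype_val).comp continuous_snd)
    have : U φ = (fun p : X × X => φ (p.1 : S) - φ (p.2 : S)) ⁻¹' ({0}ᶜ) := by
      ext p; simp [hU, sub_eq_zero]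
    rw [this]
    exact isOpen_compl_singleton.preimage hc
  obtain ⟨T, hTc, hTeq⟩ := TopologicalSpace.isOpen_iUnion_countable U hUopen
  -- enumerate T (pad with 0)
  have hTc' : (insert (0 : S →L[ℝ] ℝ) T).Countable := hTc.insert 0
  obtain ⟨ψ, hψ⟩ := Set.countable_iff_exists_subset_range.mp hTc'
  -- bounds
  have hbdd : ∀ k : ℕ, ∃ b : ℝ, 0 ≤ b ∧ ∀ x ∈ X, |ψ k x| ≤ b := by
    intro k
    obtain ⟨x₀, hx₀, hmax⟩ := hXcomp.exists_isMaxOn hXne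
      ((continuous_abs.comp (ψ k).continuous).continuousOn)
    exact ⟨|ψ k x₀|, abs_nonneg _, fun x hx => hmax hx⟩
  choose b hb0 hbb using hbdd
  refine ⟨fun k => ((1/2 : ℝ)^k / (b k + 1)) • ψ k, ?_, ?_⟩
  · intro k x hx
    have h1 : (0:ℝ) < b k + 1 := by linarith [hb0 k]
    have : |(((1/2 : ℝ)^k / (b k + 1)) • ψ k) x| = (1/2:ℝ)^k / (b k + 1) * |ψ k x| := by
      rw [ContinuousLinearMap.smul_apply, smul_eq_mul, abs_mul, abs_of_nonneg]
      positivity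
    rw [this]
    calc (1/2:ℝ)^k / (b k + 1) * |ψ k x| ≤ (1/2:ℝ)^k / (b k + 1) * (b k + 1) := by
          apply mul_le_mul_of_nonneg_left (le_trans (hbb k x hx) (by linarith)) (by positivity)
      _ = (1/2:ℝ)^k := by field_simp
  · intro x hx y hy hxy
    have hmem : (⟨⟨x, hx⟩, ⟨y, hy⟩⟩ : X × X) ∈ ⋃ φ, U φ := by
      have hxy' : (⟨x, hx⟩ : X) ≠ ⟨y, hy⟩ := by simp [Subtype.ext_iff, hxy]
      obtain ⟨φ, hφ⟩ := geometric_hahn_banach_point_point (E := S) hxy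
      exact mem_iUnion.mpr ⟨φ, ne_of_lt hφ⟩
    rw [← hTeq] at hmem
    obtain ⟨φ, hφT, hφ⟩ := by
      simpa only [mem_iUnion, exists_prop] using hmem
    obtain ⟨k, rfl⟩ := hψ (Set.mem_insert_of_mem _ hφT)
    refine ⟨k, ?_⟩
    have hφ' : ψ k x ≠ ψ k y := hφ
    have h1 : (0:ℝ) < (1/2:ℝ)^k / (b k + 1) := by
      have := hb0 k; positivity
    simp only [ContinuousLinearMap.smul_apply, smul_eq_mul]
    exact fun hc => hφ' (mul_left_cancel₀ (ne_of_gt h1) hc)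

local notation "⟪" x ", " y "⟫" => @inner ℝ _ _ x y

lemma farthest_peak {E : Type*} [NormedAddCommGroup E] [InnerProductSpace ℝ E]
    {Y : Set E} {z e : E} (hfar : ∀ y ∈ Y, ‖y - z‖ ≤ ‖e - z‖) :
    ∀ y ∈ Y, y ≠ e → ⟪y, e - z⟫ < ⟪e, e - z⟫ := by
  intro y hy hne
  by_contra hcon
  push_neg at hcon
  have h1 : (0:ℝ) ≤ ⟪y - e, e - z⟫ := by
    rw [inner_sub_left]; linarith
  have h2 : ‖y - z‖^2 = ‖y - e‖^2 + 2 * ⟪y - e, e - z⟫ + ‖e - z‖^2 := by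
    have : y - z = (y - e) + (e - z) := by abel
    rw [this, norm_add_sq_real]
  have h3 : (0:ℝ) < ‖y - e‖^2 := by
    have h : (0:ℝ) < ‖y - e‖ := norm_pos_iff.mpr (sub_ne_zero.mpr hne)
    positivity
  have h4 := hfar y hy
  nlinarith [norm_nonneg (y - z), norm_nonneg (e - z)]

lemma subset_closure_convexHull_peaks {E : Type*} [NormedAddCommGroup E]
    [InnerProductSpace ℝ E] [CompleteSpace E] {Y : Set E} (hY : IsCompact Y) :
    Y ⊆ closure (convexHull ℝ {e | e ∈ Y ∧ ∃ v : E, ∀ y ∈ Y, y ≠ e → ⟪y, v⟫ < ⟪e, v⟫}) := by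
  intro p hp
  by_contra hout
  set Pk : Set E := {e | e ∈ Y ∧ ∃ v : E, ∀ y ∈ Y, y ≠ e → ⟪y, v⟫ < ⟪e, v⟫} with hPk
  set C := closure (convexHull ℝ Pk) with hC
  have hCconv : Convex ℝ C := (convex_convexHull ℝ Pk).closure
  obtain ⟨φ, u, hφp, hφC⟩ := geometric_hahn_banach_point_closed hCconv isClosed_closure hout
  set w := (InnerProductSpace.toDual ℝ E).symm φ with hw
  have hwinner : ∀ x : E, ⟪x, w⟫ = φ x := by
    intro x
    rw [hw, real_inner_comm, InnerProductSpace.toDual_symm_apply]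
  set γ := u - φ p with hγ
  have hγpos : 0 < γ := by simp [hγ]; linarith [hφp]
  obtain ⟨R, hR⟩ : ∃ R : ℝ, 0 ≤ R ∧ ∀ y ∈ Y, ‖y - p‖ ≤ R := by
    obtain ⟨R, hR⟩ := hY.isBounded.subset_closedBall p
    exact ⟨max R 0, le_max_right _ _, fun y hy => by
      have := hR hy
      simp [Metric.mem_closedBall, dist_eq_norm] at this
      exact le_trans this (le_max_left _ _)⟩
  set t := (R^2 + 1) / (2 * γ) with ht
  have htpos : 0 < t := by positivity
  set z := p + t • w with hz
  obtain ⟨e, he, hemax⟩ := hY.exists_isMaxOn ⟨p, hp⟩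
    (continuous_norm.comp (continuous_id.sub continuous_const)).continuousOn
  have hfar : ∀ y ∈ Y, ‖y - z‖ ≤ ‖e - z‖ := fun y hy => hemax hy
  have hePk : e ∈ Pk := ⟨he, e - z, farthest_peak hfar⟩
  have heC : e ∈ C := subset_closure (subset_convexHull ℝ Pk hePk)
  have hue : u < φ e := hφC e heC
  -- norm computation
  have h1 : ‖p - z‖ ≤ ‖e - z‖ := hfar p hp
  have h2 : ‖p - z‖ = t * ‖w‖ := by
    rw [hz]
    simp [norm_smul, abs_of_pos htpos]
  have h3 : ‖e - z‖^2 = ‖e - p‖^2 - 2 * (t * ⟪e - p, w⟫) + t^2 * ‖w‖^2 := by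
    have heq : e - z = (e - p) - t • w := by rw [hz]; abel
    rw [heq, norm_sub_sq_real, real_inner_smul_right, norm_smul]
    simp [abs_of_pos htpos]
    ring
  have h4 : 2 * t * ⟪e - p, w⟫ ≤ ‖e - p‖^2 := by
    nlinarith [h1, h2, h3, norm_nonneg (p - z), norm_nonneg (e - z)]
  have h5 : ⟪e - p, w⟫ > γ := by
    rw [inner_sub_left, hwinner, hwinner]
    have : u < φ e := hue
    simp [hγ]; linarith
  have h6 : ‖e - p‖^2 ≤ R^2 := by
    have := hR.2 e he
    nlinarith [norm_nonneg (e - p), hR.1]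
  have h7 : 2 * t * γ = R^2 + 1 := by
    rw [ht]; field_simp
  nlinarith [h4, h5, h6, h7, htpos]

noncomputable abbrev ESp : Type := lp (fun _ : ℕ => ℝ) 2

lemma density_peak {S : Type*} [AddCommGroup S] [Module ℝ S] [TopologicalSpace S]
    [IsTopologicalAddGroup S] [ContinuousSMul ℝ S] [LocallyConvexSpace ℝ S] [T2Space S]
    (X : Set S) (hXne : X.Nonempty) (hXconv : Convex ℝ X) (hXcomp : IsCompact X)
    (hXmet : TopologicalSpace.MetrizableSpace X)
    {f : S → ℝ} (hconv : ConvexOn ℝ X f) (hcont : ContinuousOn f X)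
    {x₀ : S} (hx₀ : x₀ ∈ X) (hmax : ∀ y ∈ X, f y ≤ f x₀)
    {δ : ℝ} (hδ : 0 < δ) :
    ∃ e ∈ X, f x₀ - δ < f e ∧ ∃ p : S → ℝ, ContinuousOn p X ∧
      (∀ a ∈ X, ∀ b ∈ X, ∀ t : ℝ, p (t • a + (1 - t) • b) = t * p a + (1 - t) * p b) ∧
      (∀ y ∈ X, y ≠ e → p y < p e) := by
  classical
  haveI : CompactSpace X := isCompact_iff_compactSpace.mp hXcomp
  obtain ⟨L, hLb, hLsep⟩ := exists_sep_family X hXne hXcomp hXmet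
  -- membership
  have hmem : ∀ x : X, Memℓp (fun k => L k (x : S)) 2 := by
    intro x
    apply memℓp_gen
    have h2 : (2 : ℝ≥0∞).toReal = (2 : ℝ) := by norm_num
    rw [h2]
    apply Summable.of_nonneg_of_le (fun k => by positivity)
      (fun k => ?_) (summable_geometric_of_lt_one (by norm_num : (0:ℝ) ≤ 1/4) (by norm_num)) 
    have hb := hLb k x x.2
    have : ‖L k (x:S)‖ = |L k (x:S)| := rfl
    rw [this]
    calc |L k (x:S)| ^ (2:ℝ) = |L k (x:S)| ^ (2:ℕ) := by
          rw [← Real.rpow_natCast]; norm_num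
      _ ≤ ((1/2:ℝ)^k) ^ (2:ℕ) := by
          apply pow_le_pow_left₀ (abs_nonneg _) hb
      _ = (1/4 : ℝ)^k := by
          rw [← pow_mul, pow_mul']; norm_num
  set T : X → ESp := fun x => ⟨fun k => L k (x : S), hmem x⟩ with hT
  have hTapp : ∀ (x : X) (k : ℕ), (T x : ℕ → ℝ) k = L k (x : S) := fun x k => rfl
  -- continuity of T
  have hratP : ∀ (x : X) (k : ℕ), ‖(T x : ℕ → ℝ) k‖ ^ (2:ℝ≥0∞).toReal ≤ (1/4:ℝ)^k := by
    intro x k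
    have hb := hLb k x x.2
    have h2 : (2 : ℝ≥0∞).toReal = (2 : ℝ) := by norm_num
    rw [h2, hTapp x k]
    calc ‖L k (x:S)‖ ^ (2:ℝ) = |L k (x:S)| ^ (2:ℕ) := by
          rw [Real.norm_eq_abs, ← Real.rpow_natCast]; norm_num
      _ ≤ ((1/2:ℝ)^k) ^ (2:ℕ) := by
          apply pow_le_pow_left₀ (abs_nonneg _) hb
      _ = (1/4 : ℝ)^k := by
          rw [← pow_mul, pow_mul']; norm_num
  have hTcont : Continuous T := by
    set gN : ℕ → X → ESp := fun N x => ∑ k ∈ Finset.range N, lp.single 2 k ((T x : ℕ → ℝ) k)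
      with hgN
    have hsingle : ∀ (c : ℝ) (k : ℕ), (c • lp.single 2 k (1:ℝ) : ESp) = lp.single 2 k c := by
      intro c k
      apply lp.ext
      funext j
      rw [lp.coeFn_smul, Pi.smul_apply]
      by_cases h : j = k
      · subst h
        rw [lp.single_apply_self, lp.single_apply_self, smul_eq_mul, mul_one]
      · rw [lp.single_apply_ne _ _ _ h, lp.single_apply_ne _ _ _ h, smul_eq_mul, mul_zero]
    have hgNcont : ∀ N, Continuous (gN N) := by
      intro N
      have : (gN N) = fun x : X => ∑ k ∈ Finset.range N, (L k (x:S)) • lp.single 2 k (1:ℝ) := by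
        funext x
        rw [hgN]
        exact Finset.sum_congr rfl (fun k _ => by rw [hsingle, hTapp])
      rw [this]
      refine continuous_finset_sum _ (fun k _ => ?_)
      exact (((L k).continuous).comp continuous_subtype_val).smul continuous_const
    -- the uniform bound
    have hkey : ∀ (N : ℕ) (x : X), ‖T x - gN N x‖^(2:ℕ) ≤ 2 * (1/2:ℝ)^N := by
      intro N x
      have hp2 : (0:ℝ) < (2 : ℝ≥0∞).toReal := by norm_num
      have hnc := lp.norm_compl_sum_single hp2 (T x) (Finset.range N)
      have hnt := lp.norm_rpow_eq_tsum hp2 (T x)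
      have hsumm : Summable (fun k => ‖(T x : ℕ → ℝ) k‖ ^ (2:ℝ≥0∞).toReal) :=
        (lp.memℓp (T x)).summable hp2
      have htail : ∑ k ∈ Finset.range N, ‖(T x : ℕ → ℝ) k‖ ^ (2:ℝ≥0∞).toReal
          + ∑' k, ‖(T x : ℕ → ℝ) (k + N)‖ ^ (2:ℝ≥0∞).toReal
          = ∑' k, ‖(T x : ℕ → ℝ) k‖ ^ (2:ℝ≥0∞).toReal :=
        Summable.sum_add_tsum_nat_add N hsumm
      have htb : ∑' k, ‖(T x : ℕ → ℝ) (k + N)‖ ^ (2:ℝ≥0∞).toReal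
          ≤ ∑' k : ℕ, (1/4:ℝ)^(k + N) := by
        refine Summable.tsum_le_tsum (fun k => hratP x (k + N)) ?_ ?_
        · exact (summable_nat_add_iff N).mpr hsumm
        · exact (summable_nat_add_iff N).mpr
            (summable_geometric_of_lt_one (by norm_num) (by norm_num))
      have hgeo : ∑' k : ℕ, (1/4:ℝ)^(k + N) ≤ 2 * (1/2:ℝ)^N := by
        have : ∀ k : ℕ, (1/4:ℝ)^(k+N) = (1/4:ℝ)^k * (1/4:ℝ)^N := fun k => pow_add _ _ _
        rw [tsum_congr this, tsum_mul_right,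
          tsum_geometric_of_lt_one (by norm_num) (by norm_num)]
        have h14 : ((1:ℝ) - 1/4)⁻¹ = 4/3 := by norm_num
        rw [h14]
        have : (1/4:ℝ)^N ≤ (1/2:ℝ)^N :=
          pow_le_pow_left₀ (by norm_num) (by norm_num) N
        nlinarith [pow_nonneg (by norm_num : (0:ℝ) ≤ 1/4) N]
      have heq : ‖T x - gN N x‖ ^ (2:ℝ≥0∞).toReal
          = ∑' k, ‖(T x : ℕ → ℝ) k‖ ^ (2:ℝ≥0∞).toReal
            - ∑ k ∈ Finset.range N, ‖(T x : ℕ → ℝ) k‖ ^ (2:ℝ≥0∞).toReal := by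
        rw [hgN] at *
        rw [hnc, hnt]
      have hfin : ‖T x - gN N x‖ ^ (2:ℝ≥0∞).toReal ≤ 2 * (1/2:ℝ)^N := by
        rw [heq]
        linarith
      calc ‖T x - gN N x‖^(2:ℕ) = ‖T x - gN N x‖ ^ (2:ℝ≥0∞).toReal := by
            rw [show (2:ℝ≥0∞).toReal = ((2:ℕ):ℝ) by norm_num, Real.rpow_natCast]
        _ ≤ 2 * (1/2:ℝ)^N := hfin
    -- uniform convergence
    have hunif : TendstoUniformly gN T Filter.atTop := by
      rw [Metric.tendstoUniformly_iff]
      intro ε hε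
      obtain ⟨N₀, hN₀⟩ : ∃ N₀ : ℕ, 2 * (1/2:ℝ)^N₀ < ε^2 := by
        obtain ⟨N₀, hN₀⟩ := exists_pow_lt_of_lt_one (show (0:ℝ) < ε^2/2 by positivity)
          (show (1/2:ℝ) < 1 by norm_num)
        exact ⟨N₀, by linarith⟩
      filter_upwards [Filter.eventually_ge_atTop N₀] with N hN x
      rw [dist_eq_norm]
      have h1 : ‖T x - gN N x‖^(2:ℕ) ≤ 2 * (1/2:ℝ)^N := hkey N x
      have h2 : (1/2:ℝ)^N ≤ (1/2:ℝ)^N₀ :=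
        pow_le_pow_of_le_one (by norm_num) (by norm_num) hN
      have h3 : ‖T x - gN N x‖^(2:ℕ) < ε^2 := by linarith
      exact lt_of_pow_lt_pow_left₀ 2 hε.le h3
    exact hunif.continuous (Filter.Eventually.of_forall hgNcont).frequently
  -- injectivity
  have hTinj : Function.Injective T := by
    intro x y hxy
    by_contra hne
    have hne' : (x : S) ≠ (y : S) := fun h => hne (Subtype.ext h)
    obtain ⟨k, hk⟩ := hLsep x x.2 y y.2 hne'
    exact hk (by rw [← hTapp x k, ← hTapp y k, hxy])
  -- affinity over finite convex combinations
  have hTsum : ∀ {ι : Type} (t : Finset ι) (w : ι → ℝ) (a : ι → X)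
      (s₀ : S) (hs₀ : s₀ ∈ X), s₀ = ∑ i ∈ t, w i • (a i : S) →
      T ⟨s₀, hs₀⟩ = ∑ i ∈ t, w i • T (a i) := by
    intro ι t w a s₀ hs₀ hdef
    apply lp.ext
    funext k
    have hrhs : ((∑ i ∈ t, w i • T (a i) : ESp) : ℕ → ℝ) k
        = ∑ i ∈ t, w i * L k (a i : S) := by
      rw [lp.coeFn_sum, Finset.sum_apply]
      refine Finset.sum_congr rfl (fun i _ => ?_)
      rw [lp.coeFn_smul, Pi.smul_apply]
      rfl
    rw [hrhs]
    show L k s₀ = _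
    rw [hdef, map_sum]
    exact Finset.sum_congr rfl (fun i _ => by rw [map_smul]; rfl)
  -- the compact image
  set Y : Set ESp := Set.range T with hY
  have hYcomp : IsCompact Y := isCompact_range hTcont
  -- peak points upstairs
  set A : Set X := {e | ∃ v : ESp, ∀ y : X, y ≠ e → ⟪T y, v⟫ < ⟪T e, v⟫} with hA
  have hPkA : {e | e ∈ Y ∧ ∃ v : ESp, ∀ y ∈ Y, y ≠ e → ⟪y, v⟫ < ⟪e, v⟫} ⊆ T '' A := by
    rintro e' ⟨⟨e, rfl⟩, v, hv⟩
    refine ⟨e, ⟨v, fun y hy => ?_⟩, rfl⟩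
    exact hv (T y) ⟨y, rfl⟩ (fun h => hy (hTinj h))
  -- the open neighborhood
  set x₀' : X := ⟨x₀, hx₀⟩ with hx₀'
  set W : Set X := {x : X | f x₀ - δ < f (x : S)} with hW
  have hWopen : IsOpen W := by
    have hFc : Continuous fun x : X => f (x : S) := hcont.restrict
    exact isOpen_lt continuous_const hFc
  have hx₀W : x₀' ∈ W := by simp [hW, hx₀']; linarith
  have hVopen : IsOpen ((T '' Wᶜ)ᶜ) := by
    have : IsCompact (T '' Wᶜ) := (hWopen.isClosed_compl.isCompact).image hTcont
    exact this.isClosed.isOpen_compl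
  have hx₀V : T x₀' ∈ (T '' Wᶜ)ᶜ := by
    rintro ⟨y, hy, hTy⟩
    exact hy (by rwa [hTinj hTy])
  -- closure membership
  have hclos : T x₀' ∈ closure (convexHull ℝ
      {e | e ∈ Y ∧ ∃ v : ESp, ∀ y ∈ Y, y ≠ e → ⟪y, v⟫ < ⟪e, v⟫}) :=
    subset_closure_convexHull_peaks hYcomp ⟨x₀', rfl⟩
  obtain ⟨w', hw'V, hw'hull⟩ := _root_.mem_closure_iff.mp hclos _ hVopen hx₀V
  have hw'hull' : w' ∈ convexHull ℝ (T '' A) :=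
    convexHull_mono hPkA hw'hull
  -- decompose w'
  rw [convexHull_eq] at hw'hull'
  obtain ⟨ι, t, wts, z, h0, h1, hz, hcm⟩ := hw'hull'
  have hzA : ∀ i : {i // i ∈ t}, ∃ a : X, a ∈ A ∧ T a = z i :=
    fun i => by obtain ⟨a, ha, hTa⟩ := hz i i.2; exact ⟨a, ha, hTa⟩
  choose a haA hTa using hzA
  -- the combined point
  have h1' : ∑ i ∈ t.attach, wts (i : ι) = 1 := by rw [Finset.sum_attach]; exact h1
  have h0' : ∀ i ∈ t.attach, 0 ≤ wts (i : ι) := fun i _ => h0 i i.2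
  set s₀ : S := ∑ i ∈ t.attach, wts (i : ι) • (a i : S) with hs₀def
  have hs₀X : s₀ ∈ X := hXconv.sum_mem h0' h1' (fun i _ => (a i).2)
  have hTs₀ : T ⟨s₀, hs₀X⟩ = w' := by
    rw [hTsum t.attach (fun i => wts (i : ι)) a s₀ hs₀X rfl]
    rw [← hcm, Finset.centerMass_eq_of_sum_1 _ _ h1]
    rw [← Finset.sum_attach t (fun i => wts i • z i)]
    exact Finset.sum_congr rfl (fun i _ => by rw [hTa])
  -- s₀ lands in W
  have hs₀W : (⟨s₀, hs₀X⟩ : X) ∈ W := by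
    by_contra hc
    exact hw'V ⟨⟨s₀, hs₀X⟩, hc, hTs₀⟩
  have hfs₀ : f x₀ - δ < f s₀ := hs₀W
  -- Jensen
  have hjensen : f s₀ ≤ ∑ i ∈ t.attach, wts (i : ι) * f (a i : S) := by
    have := hconv.map_sum_le h0' h1' (fun i _ => (a i).2)
    rw [hs₀def]
    simpa [smul_eq_mul] using this
  -- extract a good peak point
  have hex : ∃ i ∈ t.attach, f x₀ - δ < f (a i : S) := by
    by_contra hc
    push_neg at hc
    have : ∑ i ∈ t.attach, wts (i : ι) * f (a i : S) ≤
        ∑ i ∈ t.attach, wts (i : ι) * (f x₀ - δ) := by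
      apply Finset.sum_le_sum
      intro i hi
      exact mul_le_mul_of_nonneg_left (hc i hi) (h0' i hi)
    rw [← Finset.sum_mul, h1', one_mul] at this
    linarith
  obtain ⟨i, _, hfi⟩ := hex
  obtain ⟨v, hv⟩ := haA i
  -- build p
  set p : S → ℝ := fun s => ∑' k, v k * L k s with hp
  have hpinner : ∀ (x : X), p (x : S) = ⟪T x, v⟫ := by
    intro x
    rw [lp.inner_eq_tsum]
    refine tsum_congr (fun k => ?_)
    have : @inner ℝ _ _ ((T x : ℕ → ℝ) k) (v k) = (T x : ℕ → ℝ) k * v k := by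
      simp [RCLike.inner_apply, starRingEnd_apply]; ring
    rw [this, hTapp x k, mul_comm]
  have hpcont : ContinuousOn p X := by
    refine continuousOn_tsum (u := fun k => ‖v‖ * (1/2:ℝ)^k)
      (fun k => (continuous_const.mul (L k).continuous).continuousOn) ?_ ?_
    · exact (summable_geometric_of_lt_one (by norm_num) (by norm_num)).mul_left _
    · intro k x hx
      have h1 : ‖v k‖ ≤ ‖v‖ := lp.norm_apply_le_norm (by norm_num) v k
      have h2 : |L k x| ≤ (1/2:ℝ)^k := hLb k x hx
      have : ‖v k * L k x‖ = |v k| * |L k x| := abs_mul _ _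
      rw [this]
      exact mul_le_mul h1 h2 (abs_nonneg _) (norm_nonneg _)
  have hpaff : ∀ a_1 ∈ X, ∀ b ∈ X, ∀ t : ℝ,
      p (t • a_1 + (1 - t) • b) = t * p a_1 + (1 - t) * p b := by
    intro a1 ha1 b hb t
    have hsum : ∀ c ∈ X, Summable fun k => v k * L k c := by
      intro c hc
      refine Summable.of_norm_bounded (g := fun k => ‖v‖ * (1/2:ℝ)^k)
        ((summable_geometric_of_lt_one (by norm_num) (by norm_num)).mul_left _) (fun k => ?_)
      have h1 : ‖v k‖ ≤ ‖v‖ := lp.norm_apply_le_norm (by norm_num) v k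
      have h2 : |L k c| ≤ (1/2:ℝ)^k := hLb k c hc
      rw [show ‖v k * L k c‖ = |v k| * |L k c| from abs_mul _ _]
      exact mul_le_mul h1 h2 (abs_nonneg _) (norm_nonneg _)
    have hterm : ∀ k, v k * L k (t • a1 + (1 - t) • b)
        = t * (v k * L k a1) + (1 - t) * (v k * L k b) := by
      intro k
      have : L k (t • a1 + (1 - t) • b) = t * L k a1 + (1 - t) * L k b := by
        rw [map_add, map_smul, map_smul]; rfl
      rw [this]; ring
    show (∑' k, v k * L k (t • a1 + (1 - t) • b)) = _
    rw [tsum_congr hterm,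
      Summable.tsum_add ((hsum a1 ha1).mul_left t) ((hsum b hb).mul_left (1 - t)),
      tsum_mul_left, tsum_mul_left]
  refine ⟨(a i : S), (a i).2, hfi, p, hpcont, hpaff, ?_⟩
  intro y hy hne
  have : (⟨y, hy⟩ : X) ≠ a i := fun h => hne (congrArg Subtype.val h)
  have := hv ⟨y, hy⟩ this
  rwa [hpinner ⟨y, hy⟩, hpinner (a i)]


theorem stmt16 {S : Type*} [AddCommGroup S] [Module ℝ S] [TopologicalSpace S]
    [IsTopologicalAddGroup S] [ContinuousSMul ℝ S] [LocallyConvexSpace ℝ S] [T2Space S]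
    (X : Set S) (hXne : X.Nonempty) (hXconv : Convex ℝ X) (hXcomp : IsCompact X)
    (hXmet : TopologicalSpace.MetrizableSpace X)
    (B : Set (S → ℝ)) (hBdef : B = {f | ConvexOn ℝ X f ∧ ContinuousOn f X})
    (G : Set (S → ℝ)) (hGdef : G = {f ∈ B | ∃ e ∈ X,
      (∀ y ∈ X, y ≠ e → f y < f e) ∧ ExtremeIn X e}) :
    ((∀ f ∈ B, ∀ ε > (0:ℝ), ∃ g ∈ G, rhoOn X f g < ε) ∧
      ∃ O : ℕ → Set (S → ℝ),
        (∀ n, O n ⊆ B ∧ ∀ f ∈ O n, ∃ ε > (0:ℝ), ∀ g ∈ B, rhoOn X f g < ε → g ∈ O n) ∧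
        G = ⋂ n, O n) := by
  classical
  haveI : CompactSpace X := isCompact_iff_compactSpace.mp hXcomp
  letI : MetricSpace X := TopologicalSpace.metrizableSpaceMetric X
  subst hGdef
  subst hBdef
  constructor
  · -- density
    rintro f ⟨hconv, hcont⟩ ε hε
    obtain ⟨x₀, hx₀, hmax₀⟩ := hXcomp.exists_isMaxOn hXne hcont
    have hmax : ∀ y ∈ X, f y ≤ f x₀ := fun y hy => hmax₀ hy
    set δ : ℝ := ε/4 with hδdef
    have hδ : 0 < δ := by positivity
    obtain ⟨e, he, hfe, p, hpcont, hpaff, hppeak⟩ :=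
      density_peak X hXne hXconv hXcomp hXmet hconv hcont hx₀ hmax hδ
    obtain ⟨m₀, hm₀, hmin₀⟩ := hXcomp.exists_isMinOn hXne hcont
    have hmin : ∀ y ∈ X, f m₀ ≤ f y := fun y hy => hmin₀ hy
    -- choose the slope K
    obtain ⟨K, hK0, hKa⟩ : ∃ K : ℝ, 0 < K ∧
        ∀ x ∈ X, f x ≤ f e - δ → f e + δ + K * (p x - p e) ≤ f x := by
      set C : Set X := {x : X | f (x : S) ≤ f e - δ} with hC
      rcases C.eq_empty_or_nonempty with hCe | hCne
      · refine ⟨1, one_pos, fun x hx hfx => absurd ?_ (by simp [hCe] : ¬ (⟨x, hx⟩ : X) ∈ C)⟩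
        exact hfx
      · have hCcl : IsClosed C := isClosed_le (hcont.restrict) continuous_const
        obtain ⟨y₁, hy₁C, hy₁max⟩ := hCcl.isCompact.exists_isMaxOn hCne
          ((hpcont.restrict).continuousOn)
        set η : ℝ := p (y₁ : S) - p e with hη
        have hy₁ne : (y₁ : S) ≠ e := by
          intro hcontra
          have : f (y₁ : S) ≤ f e - δ := hy₁C
          rw [hcontra] at this
          linarith
        have hηneg : η < 0 := by
          have := hppeak (y₁ : S) y₁.2 hy₁ne
          simp [hη]; linarith
        refine ⟨(f e + δ + 1 - f m₀) / (-η), by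
          have h1 : 0 < f e + δ + 1 - f m₀ := by
            have := hmin e he; linarith
          exact div_pos h1 (by linarith), ?_⟩
        intro x hx hfx
        have hxC : (⟨x, hx⟩ : X) ∈ C := hfx
        have hqx : p x - p e ≤ η := by
          have := hy₁max hxC
          simp only [hη]
          have h' : p x ≤ p (y₁ : S) := this
          linarith
        have hηne : η ≠ 0 := ne_of_lt hηneg
        have hKη : (f e + δ + 1 - f m₀) / (-η) * η = -(f e + δ + 1 - f m₀) := by
          rw [div_mul_eq_mul_div, mul_div_assoc, div_neg, div_self hηne]
          ring
        have hKq : (f e + δ + 1 - f m₀) / (-η) * (p x - p e)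
            ≤ (f e + δ + 1 - f m₀) / (-η) * η := by
          apply mul_le_mul_of_nonneg_left hqx
          have h1 : 0 < f e + δ + 1 - f m₀ := by have := hmin e he; linarith
          exact (div_pos h1 (by linarith)).le
        have := hmin x hx
        rw [hKη] at hKq
        linarith
    -- the perturbed function
    set a : S → ℝ := fun s => f e + δ + K * (p s - p e) with ha
    set g : S → ℝ := fun s => max (f s) (a s) with hg
    have hacont : ContinuousOn a X :=
      continuousOn_const.add (continuousOn_const.mul (hpcont.sub continuousOn_const))
    have haconv : ConvexOn ℝ X a := by
      refine ⟨hXconv, fun x hx y hy s t hs ht hst => le_of_eq ?_⟩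
      have hts : t = 1 - s := by linarith
      subst hts
      have := hpaff x hx y hy s
      simp only [ha, smul_eq_mul]
      rw [this]
      ring
    have hgconv : ConvexOn ℝ X g := by
      have := hconv.sup haconv
      simpa [Pi.sup_def, hg] using this
    have hgcont : ContinuousOn g X := hcont.sup hacont
    have hae : a e = f e + δ := by simp [ha]
    have hge : g e = f e + δ := by
      rw [hg]
      simp only [hae]
      exact max_eq_right (by linarith)
    have hstrict : ∀ y ∈ X, y ≠ e → g y < g e := by
      intro y hy hne
      rw [hge, hg]
      apply max_lt
      · have := hmax y hy
        linarith
      · have hpy := hppeak y hy hne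
        have : K * (p y - p e) < 0 := mul_neg_of_pos_of_neg hK0 (by linarith)
        simp only [ha]
        linarith
    refine ⟨g, ⟨⟨hgconv, hgcont⟩, e, he, hstrict, strictmax_extremeIn hgconv he hstrict⟩, ?_⟩
    have hbound : ∀ x ∈ X, |f x - g x| ≤ 2*δ := by
      intro x hx
      have hgef : f x ≤ g x := le_max_left _ _
      rw [abs_sub_comm, abs_of_nonneg (by linarith)]
      rcases le_or_gt (f x) (f e - δ) with hcase | hcase
      · have : a x ≤ f x := hKa x hx hcase
        have : g x = f x := max_eq_left this
        linarith
      · have h1 : a x ≤ f x + 2*δ := by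
          have hpx : p x ≤ p e := by
            rcases eq_or_ne x e with rfl | hne
            · exact le_refl _
            · exact (hppeak x hx hne).le
          have : K * (p x - p e) ≤ 0 := mul_nonpos_of_nonneg_of_nonpos hK0.le (by linarith)
          simp only [ha]
          linarith
        have : g x ≤ f x + 2*δ := max_le (by linarith) h1
        linarith
    have hrho : rhoOn X f g ≤ 2*δ := rhoOn_le hXne hbound
    have : 2*δ < ε := by rw [hδdef]; linarith
    linarith
  · -- the Gδ structure
    set O : ℕ → Set (S → ℝ) := fun n =>
      {f ∈ {f | ConvexOn ℝ X f ∧ ContinuousOn f X} |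
        ∃ x : X, ∀ y : X, 1/((n:ℝ)+1) ≤ dist y x → f (y : S) < f (x : S)} with hO
    refine ⟨O, fun n => ⟨sep_subset _ _, ?_⟩, ?_⟩
    · -- openness
      rintro f ⟨⟨hconv, hcont⟩, x, hx⟩
      set C : Set X := {y : X | 1/((n:ℝ)+1) ≤ dist y x} with hC
      rcases C.eq_empty_or_nonempty with hCe | hCne
      · refine ⟨1, one_pos, fun g hgB _ => ⟨hgB, x, fun y hy => ?_⟩⟩
        exact absurd (show y ∈ C from hy) (by simp [hCe])
      · have hCcl : IsClosed C :=
          isClosed_le continuous_const (continuous_id.dist continuous_const)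
        obtain ⟨y₀, hy₀C, hy₀max⟩ := hCcl.isCompact.exists_isMaxOn hCne
          (hcont.restrict).continuousOn
        set γ : ℝ := f (x : S) - f (y₀ : S) with hγ
        have hγpos : 0 < γ := by
          have := hx y₀ hy₀C
          simp [hγ]; linarith
        set ε := γ/(γ+3) with hε
        have hε1 : ε < 1 := by
          rw [hε, div_lt_one (by linarith)]; linarith
        have hεfrac : ε / (1 - ε) = γ/3 := by
          rw [hε]
          have h1 : (0:ℝ) < γ + 3 := by linarith
          field_simp
          ring
        refine ⟨ε, by rw [hε]; positivity, fun g hgB hrho => ⟨hgB, x, fun y hy => ?_⟩⟩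
        have hpt : ∀ s ∈ X, |f s - g s| < γ/3 := by
          intro s hs
          rw [← hεfrac]
          exact rhoOn_lt_pointwise hε1 hrho hs
        have h1 : |f (y:S) - g (y:S)| < γ/3 := hpt _ y.2
        have h2 : |f (x:S) - g (x:S)| < γ/3 := hpt _ x.2
        have h3 : f (y:S) ≤ f (y₀:S) := hy₀max hy
        have h4 : |f (y:S) - g (y:S)| < γ/3 → g (y:S) < f (y:S) + γ/3 := by
          intro h; cases abs_lt.mp h; linarith
        have h5 : |f (x:S) - g (x:S)| < γ/3 → f (x:S) - γ/3 < g (x:S) := by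
          intro h; cases abs_lt.mp h; linarith
        have := h4 h1
        have := h5 h2
        simp only [hγ] at *
        linarith
    · -- G = ⋂ O n
      apply Set.eq_of_subset_of_subset
      · rintro f ⟨hfB, e, he, hstrict, hext⟩
        apply Set.mem_iInter.mpr
        intro n
        refine ⟨hfB, ⟨e, he⟩, fun y hy => ?_⟩
        apply hstrict y y.2
        intro hcontra
        have : y = (⟨e, he⟩ : X) := Subtype.ext hcontra
        rw [this] at hy
        simp at hy
        have : (0:ℝ) < 1/((n:ℝ)+1) := by positivity
        linarith
      · intro f hf
        have hfO : ∀ n, f ∈ O n := fun n => Set.mem_iInter.mp hf n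
        obtain ⟨⟨hconv, hcont⟩, -⟩ := hfO 0
        obtain ⟨x₀, hx₀X, hmax₀⟩ := hXcomp.exists_isMaxOn hXne hcont
        have hmax : ∀ y ∈ X, f y ≤ f x₀ := fun y hy => hmax₀ hy
        choose xn hxn using fun n => (hfO n).2
        -- every maximizer is close to each xn
        have hclose : ∀ (m : X), (∀ y ∈ X, f y ≤ f (m : S)) →
            ∀ n, dist m (xn n) < 1/((n:ℝ)+1) := by
          intro m hm n
          by_contra hc
          push_neg at hc
          have := hxn n m hc
          have := hm (xn n : S) (xn n).2
          linarith
        have huniq : ∀ (m : X), (∀ y ∈ X, f y ≤ f (m : S)) → m = (⟨x₀, hx₀X⟩ : X) := by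
          intro m hm
          have hmx : ∀ n : ℕ, dist m (⟨x₀, hx₀X⟩ : X) < 2/((n:ℝ)+1) := by
            intro n
            have h1 := hclose m hm n
            have h2 := hclose ⟨x₀, hx₀X⟩ hmax n
            calc dist m (⟨x₀, hx₀X⟩ : X) ≤ dist m (xn n) + dist (⟨x₀, hx₀X⟩ : X) (xn n) :=
                  dist_triangle_right _ _ _
              _ < 2/((n:ℝ)+1) := by rw [show (2:ℝ)/((n:ℝ)+1) = 1/((n:ℝ)+1) + 1/((n:ℝ)+1) by ring]
                                    exact add_lt_add h1 h2
          have hd0 : dist m (⟨x₀, hx₀X⟩ : X) ≤ 0 := by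
            by_contra hd
            push_neg at hd
            obtain ⟨n, hn⟩ := exists_nat_gt (2 / dist m (⟨x₀, hx₀X⟩ : X))
            have hn' : 2 / dist m (⟨x₀, hx₀X⟩ : X) < (n:ℝ) + 1 := by linarith
            have : 2/((n:ℝ)+1) < dist m (⟨x₀, hx₀X⟩ : X) := by
              rw [div_lt_iff₀ (by positivity)] at hn' ⊢
              · nlinarith
            linarith [hmx n]
          exact dist_le_zero.mp hd0
        have hstrict : ∀ y ∈ X, y ≠ x₀ → f y < f x₀ := by
          intro y hy hne
          rcases lt_or_eq_of_le (hmax y hy) with h | h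
          · exact h
          · exfalso
            have hym : ∀ z ∈ X, f z ≤ f y := fun z hz => (hmax z hz).trans h.ge
            have := huniq ⟨y, hy⟩ hym
            exact hne (congrArg Subtype.val this)
        exact ⟨⟨hconv, hcont⟩, x₀, hx₀X, hstrict, strictmax_extremeIn hconv hx₀X hstrict⟩
end

section
/- Let X be a nonempty convex compact metrizable subset of a Hausdorff locally convex topological vector space, and x ∈ X. Let Ω_x be the set of convex upper semicontinuous functions f : X → ℝ with f(x) = max_X f. Then there exists an extreme point e of X such that every f ∈ Ω_x satisfies f(e) = max_X f. -/
open Topology Filter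

lemma closed_superlevel {S : Type*} [TopologicalSpace S] {X : Set S} (hX : IsClosed X)
    {f : S → ℝ} (hf : UpperSemicontinuousOn f X) (c : ℝ) :
    IsClosed {y | y ∈ X ∧ c ≤ f y} := by
  apply isClosed_of_closure_subset
  intro y hy
  have hyX : y ∈ X := hX.closure_subset (closure_mono (fun z hz => hz.1) hy)
  refine ⟨hyX, ?_⟩
  by_contra h
  push_neg at h
  have h1 : ∀ᶠ z in 𝓝[X] y, f z < c := hf y hyX c h
  have hne : Filter.NeBot (𝓝[{y | y ∈ X ∧ c ≤ f y}] y) :=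
    mem_closure_iff_nhdsWithin_neBot.mp hy
  have h2 : ∀ᶠ z in 𝓝[{y | y ∈ X ∧ c ≤ f y}] y, f z < c :=
    nhdsWithin_mono y (fun z hz => hz.1) h1
  have h3 : ∀ᶠ z in 𝓝[{y | y ∈ X ∧ c ≤ f y}] y, c ≤ f z :=
    eventually_mem_nhdsWithin.mono (fun z hz => hz.2)
  exact (h2.and h3).exists.elim (fun z hz => absurd hz.2 (not_le.mpr hz.1))

theorem stmt17 {S : Type*} [AddCommGroup S] [Module ℝ S] [TopologicalSpace S]
    [IsTopologicalAddGroup S] [ContinuousSMul ℝ S] [LocallyConvexSpace ℝ S] [T2Space S]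
    (X : Set S) (hXne : X.Nonempty) (hXconv : Convex ℝ X) (hXcomp : IsCompact X)
    (hXmet : TopologicalSpace.MetrizableSpace X)
    (x : S) (hx : x ∈ X)
    (Ω : Set (S → ℝ)) (hΩdef : Ω = {f | ConvexOn ℝ X f ∧
      UpperSemicontinuousOn f X ∧ ∀ y ∈ X, f y ≤ f x}) :
    ∃ e, ExtremeIn X e ∧ ∀ f ∈ Ω, ∀ y ∈ X, f y ≤ f e := by
  have hΩ : ∀ f ∈ Ω, ConvexOn ℝ X f ∧
      UpperSemicontinuousOn f X ∧ ∀ y ∈ X, f y ≤ f x := by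
    intro f hf; rw [hΩdef] at hf; exact hf
  set M : Set S := {y | y ∈ X ∧ ∀ f ∈ Ω, f x ≤ f y} with hM
  have hMsub : M ⊆ X := fun y hy => hy.1
  have hMclosed : IsClosed M := by
    have : M = X ∩ ⋂ f ∈ Ω, {y | y ∈ X ∧ f x ≤ f y} := by
      ext y
      simp only [hM, Set.mem_inter_iff, Set.mem_iInter, Set.mem_setOf_eq]
      exact ⟨fun h => ⟨h.1, fun f hf => ⟨h.1, h.2 f hf⟩⟩,
        fun h => ⟨h.1, fun f hf => (h.2 f hf).2⟩⟩
    rw [this]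
    exact hXcomp.isClosed.inter (isClosed_biInter fun f hf =>
      closed_superlevel hXcomp.isClosed (hΩ f hf).2.1 (f x))
  have hMcomp : IsCompact M := hXcomp.of_isClosed_subset hMclosed hMsub
  obtain ⟨e, he⟩ := hMcomp.extremePoints_nonempty ⟨x, hx, fun f hf => le_refl _⟩
  rw [mem_extremePoints] at he
  have heM : e ∈ M := he.1
  -- M is a face of X
  have hface : ∀ y ∈ X, ∀ z ∈ X, ∀ α : ℝ, 0 < α → α < 1 →
      e = α • y + (1 - α) • z → y ∈ M ∧ z ∈ M := by
    intro y hy z hz α hα0 hα1 heq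
    have key : ∀ f ∈ Ω, f x ≤ f y ∧ f x ≤ f z := by
      intro f hf'
      have hf := hΩ f hf' 
      have hfe : f x ≤ f e := heM.2 f hf'
      have hconv : f e ≤ α * f y + (1 - α) * f z := by
        rw [heq]
        exact hf.1.2 hy hz hα0.le (by linarith) (by ring)
      have hfy : f y ≤ f x := hf.2.2 y hy
      have hfz : f z ≤ f x := hf.2.2 z hz
      constructor
      · by_contra h
        push_neg at h
        nlinarith
      · by_contra h
        push_neg at h
        nlinarith
    exact ⟨⟨hy, fun f hf => (key f hf).1⟩, ⟨hz, fun f hf => (key f hf).2⟩⟩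
  refine ⟨e, ⟨hMsub heM, ?_⟩, fun f hf y hy => le_trans ((hΩ f hf).2.2 y hy) (heM.2 f hf)⟩
  intro y hy z hz α hα0 hα1 heq
  obtain ⟨hyM, hzM⟩ := hface y hy z hz α hα0 hα1 heq
  have hseg : e ∈ openSegment ℝ y z :=
    ⟨α, 1 - α, hα0, by linarith, by ring, heq.symm⟩
  obtain ⟨h1, h2⟩ := he.2 y hyM z hzM hseg
  exact ⟨h1.symm, h2.symm⟩
end
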